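/- arXiv:2207.05119 — 5 statements merged into one kernel-verified Lean document; each statement's English description precedes it below -/
import Mathlib

section
/- For any permutation w in S_n, the minimum number of runs needed to factor a reduced word of w is at least n minus the length of a longest increasing subsequence of w. -/
/-- The simple transposition `s_i` in `S_n`, swapping positions `i` and `i+1`
(1-indexed, so valid for `1 ≤ i ≤ n-1`); otherwise the identity. -/
def simpleT (n : ℕ) (i : ℕ) : Equiv.Perm (Fin n) :=
  if h : 1 ≤ i ∧ i < n then Equiv.swap ⟨i - 1, by omega⟩ ⟨i, h.2⟩ else 1

/-- `l` is a word in the simple transpositions `s_1, …, s_{n-1}` with product `w`. -/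
def IsWord (n : ℕ) (w : Equiv.Perm (Fin n)) (l : List ℕ) : Prop :=
  (∀ i ∈ l, 1 ≤ i ∧ i < n) ∧ (l.map (simpleT n)).prod = w

/-- The Coxeter length of `w`. -/
noncomputable def coxLength (n : ℕ) (w : Equiv.Perm (Fin n)) : ℕ :=
  sInf {k | ∃ l, IsWord n w l ∧ l.length = k}

/-- A reduced word for `w`: a word of minimal length. -/
def IsReducedWord (n : ℕ) (w : Equiv.Perm (Fin n)) (l : List ℕ) : Prop :=
  IsWord n w l ∧ l.length = coxLength n w

/-- A run: a nonempty word of consecutive integers, increasing or decreasing. -/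
def IsRun (r : List ℕ) : Prop :=
  r ≠ [] ∧ (List.Chain' (fun a b => b = a + 1) r ∨ List.Chain' (fun a b => a = b + 1) r)

/-- `run(w)`: the minimum number of runs whose concatenation is a reduced word of `w`. -/
noncomputable def runStat (n : ℕ) (w : Equiv.Perm (Fin n)) : ℕ :=
  sInf {k | ∃ rs : List (List ℕ), rs.length = k ∧ (∀ r ∈ rs, IsRun r) ∧
    IsReducedWord n w rs.flatten}

/-- One-line notation of `w`, with entries `1, …, n`. -/
def oneLine {n : ℕ} (w : Equiv.Perm (Fin n)) : List ℕ :=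
  List.ofFn (fun i => (w i : ℕ) + 1)

/-- Length of a longest increasing subsequence of the one-line notation of `w`. -/
noncomputable def lisLen {n : ℕ} (w : Equiv.Perm (Fin n)) : ℕ :=
  sSup {k | ∃ l : List ℕ, l.Sublist (oneLine w) ∧ l.Pairwise (· < ·) ∧ l.length = k}

/-- Schensted row insertion: insert `x` into row `r`, possibly bumping an entry. -/
def rowInsert (r : List ℕ) (x : ℕ) : List ℕ × Option ℕ :=
  match r.findIdx? (fun y => decide (x < y)) with
  | none => (r ++ [x], none)
  | some i => (r.set i x, r[i]?)

/-- Schensted insertion of `x` into a tableau (list of rows). -/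
def bumpInsert : List (List ℕ) → ℕ → List (List ℕ)
  | [], x => [[x]]
  | r :: rest, x =>
    match rowInsert r x with
    | (r', none) => r' :: rest
    | (r', some y) => r' :: bumpInsert rest y

/-- The RSK insertion tableau of a word. -/
def Ptab (w : List ℕ) : List (List ℕ) := w.foldl bumpInsert []

/-- The index of the row where the new box appeared, going from `p` to `p'`. -/
def recRow (p p' : List (List ℕ)) : ℕ :=
  (List.range p'.length).findIdx
    (fun j => decide ((p.getD j []).length < (p'.getD j []).length))

/-- Add entry `v` at the end of row `j` of `q`. -/
def addAt (q : List (List ℕ)) (j v : ℕ) : List (List ℕ) :=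
  if j < q.length then q.set j ((q.getD j []) ++ [v]) else q ++ [[v]]

/-- The RSK recording tableau of a word. -/
def Qtab (w : List ℕ) : List (List ℕ) :=
  ((w.zipIdx.map Prod.swap).foldl (fun pq ix =>
    let p' := bumpInsert pq.1 ix.2
    (p', addAt pq.2 (recRow pq.1 p') (ix.1 + 1))) (([], []) : List (List ℕ) × List (List ℕ))).2

/-- The second row of a tableau. -/
def Row2 (t : List (List ℕ)) : List ℕ := t.getD 1 []

/-- A set `L` of integers is uncrowded if every interval `[y, y+2x]` contains
at most `x+1` elements of `L`. -/
def Uncrowded (L : Set ℤ) : Prop :=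
  ∀ (y : ℤ) (x : ℕ), 0 < x → ({z : ℤ | y ≤ z ∧ z ≤ y + 2 * (x : ℤ)} ∩ L).ncard ≤ x + 1

/-- `w` is boolean: some reduced word of `w` has all distinct letters. -/
def BooleanPerm (n : ℕ) (w : Equiv.Perm (Fin n)) : Prop :=
  ∃ l, IsReducedWord n w l ∧ l.Nodup

/-- `w` avoids the pattern `321`. -/
def Avoids321 {n : ℕ} (w : Equiv.Perm (Fin n)) : Prop :=
  ¬ ∃ i j k : Fin n, i < j ∧ j < k ∧ w k < w j ∧ w j < w i

/-- `w` avoids the pattern `3412`. -/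
def Avoids3412 {n : ℕ} (w : Equiv.Perm (Fin n)) : Prop :=
  ¬ ∃ i j k l : Fin n, i < j ∧ j < k ∧ k < l ∧ w k < w l ∧ w l < w i ∧ w i < w j

/-- The support of `w`: the letters appearing in reduced words of `w`. -/
def Supp (n : ℕ) (w : Equiv.Perm (Fin n)) : Set ℕ :=
  {i | ∃ l, IsReducedWord n w l ∧ i ∈ l}

/-- The entries of a row, as a set of integers. -/
def entrySet (r : List ℕ) : Set ℤ := {z | ∃ x ∈ r, (x : ℤ) = z}

/-- `(r1, r2)` are the rows of a standard Young tableau of size `n` with at most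
two rows (entries `1, …, n`). -/
def IsSYT2 (n : ℕ) (r1 r2 : List ℕ) : Prop :=
  r1.Pairwise (· < ·) ∧ r2.Pairwise (· < ·) ∧ r2.length ≤ r1.length ∧
  (∀ i < r2.length, r1.getD i 0 < r2.getD i 0) ∧
  (r1 ++ r2).Perm (List.range' 1 n)

/-- The tableau (list of nonempty rows) with rows `r1`, `r2`. -/
def tab2 (r1 r2 : List ℕ) : List (List ℕ) :=
  if r2 = [] then (if r1 = [] then [] else [r1]) else [r1, r2]

/-- Every maximal block of `1`s (`true`s) in the binary word has odd length. -/
def OddBlocks (l : List Bool) : Prop :=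
  ∀ l₁ l₂ l₃ : List Bool, l = l₁ ++ l₂ ++ l₃ → l₂ ≠ [] → (∀ b ∈ l₂, b = true) →
    l₁.getLast? ≠ some true → l₃.head? ≠ some true → Odd l₂.length

namespace Stmt1Aux

noncomputable def lisL (L : List ℕ) : ℕ :=
  sSup {k | ∃ l : List ℕ, l.Sublist L ∧ l.Pairwise (· < ·) ∧ l.length = k}

lemma lisL_bdd (L : List ℕ) :
    BddAbove {k | ∃ l : List ℕ, l.Sublist L ∧ l.Pairwise (· < ·) ∧ l.length = k} := by
  refine ⟨L.length, fun k hk => ?_⟩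
  obtain ⟨l, hs, -, rfl⟩ := hk
  exact hs.length_le

lemma le_lisL {L l : List ℕ} (hs : l.Sublist L) (hsort : l.Pairwise (· < ·)) :
    l.length ≤ lisL L :=
  le_csSup (lisL_bdd L) ⟨l, hs, hsort, rfl⟩

lemma lisL_mem (L : List ℕ) :
    ∃ l : List ℕ, l.Sublist L ∧ l.Pairwise (· < ·) ∧ l.length = lisL L := by
  have hne : {k | ∃ l : List ℕ, l.Sublist L ∧ l.Pairwise (· < ·) ∧ l.length = k}.Nonempty :=
    ⟨0, ⟨[], List.nil_sublist L, List.Pairwise.nil, rfl⟩⟩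
  exact Nat.sSup_mem hne (lisL_bdd L)

lemma simpleT_val {n i : ℕ} (h1 : 1 ≤ i) (h2 : i < n) (x : Fin n) :
    ((simpleT n i) x : ℕ) = if (x : ℕ) = i - 1 then i else if (x : ℕ) = i then i - 1 else x := by
  rw [simpleT, dif_pos ⟨h1, h2⟩, Equiv.swap_apply_def]
  simp only [Fin.ext_iff]
  split_ifs <;> simp_all


lemma lemM {n : ℕ} (f : Fin n → ℕ) (σ : Equiv.Perm (Fin n)) (p : Fin n)
    (hm : ∀ i j : Fin n, i ≠ p → j ≠ p → i < j → σ i < σ j) :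
    lisL (List.ofFn f) ≤ lisL (List.ofFn (fun i => f (σ i))) + 1 := by
  classical
  obtain ⟨S, hsub, hsort, hlen⟩ := lisL_mem (List.ofFn f)
  rw [List.sublist_iff_exists_fin_orderEmbedding_get_eq] at hsub
  obtain ⟨e, he⟩ := hsub
  have hn : (List.ofFn f).length = n := List.length_ofFn
  have hjj : ∀ i, S.get i = f (Fin.cast hn (e i)) := by
    intro i; rw [he i, List.get_ofFn]
  have hjmono : StrictMono (fun i => Fin.cast hn (e i)) := by
    intro a b hab
    have h1 := e.strictMono hab
    rw [Fin.lt_def] at h1 ⊢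
    simpa using h1
  have hskip : ∃ (m : ℕ) (g : Fin m → Fin S.length), S.length ≤ m + 1 ∧ StrictMono g ∧
      ∀ i, σ⁻¹ (Fin.cast hn (e (g i))) ≠ p := by
    by_cases hex : ∃ i0 : Fin S.length, σ⁻¹ (Fin.cast hn (e i0)) = p
    · obtain ⟨i0, hi0⟩ := hex
      refine ⟨S.length - 1,
        fun i => ⟨if i.val < i0.val then i.val else i.val + 1,
          by have h1 := i.isLt; have h2 := i0.isLt; split_ifs <;> omega⟩,
        by omega, ?_, ?_⟩
      · intro a b hab
        rw [Fin.lt_def] at hab ⊢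
        dsimp only
        split_ifs <;> omega
      · intro i hip
        have hji := (σ⁻¹ : Equiv.Perm (Fin n)).injective (hip.trans hi0.symm)
        have hji2 := hjmono.injective hji
        rw [Fin.ext_iff] at hji2
        dsimp only at hji2
        have h1 := i.isLt
        split_ifs at hji2 <;> omega
    · push_neg at hex
      exact ⟨S.length, id, by omega, strictMono_id, fun i => hex i⟩
  obtain ⟨m, g, hkm, hg, hgp⟩ := hskip
  have hS'sorted : (List.ofFn (fun i : Fin m => f (Fin.cast hn (e (g i))))).Pairwise (· < ·) := by
    rw [List.pairwise_ofFn]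
    intro a b hab
    have h1 : S.get (g a) < S.get (g b) := hsort.sortedLT.strictMono_get (hg hab)
    rwa [hjj, hjj] at h1
  have hS'sub : (List.ofFn (fun i : Fin m => f (Fin.cast hn (e (g i))))).Sublist
      (List.ofFn (fun i => f (σ i))) := by
    rw [List.sublist_iff_exists_fin_orderEmbedding_get_eq]
    have hlen2 : (List.ofFn (fun i => f (σ i))).length = n := List.length_ofFn
    have hlenS' : (List.ofFn (fun i : Fin m => f (Fin.cast hn (e (g i))))).length = m :=
      List.length_ofFn
    have hmono2 : StrictMono (fun i : Fin (List.ofFn (fun i : Fin m => f (Fin.cast hn (e (g i))))).length =>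
        Fin.cast hlen2.symm (σ⁻¹ (Fin.cast hn (e (g (Fin.cast hlenS' i)))))) := by
      intro a b hab
      have hab' : Fin.cast hlenS' a < Fin.cast hlenS' b := by
        rw [Fin.lt_def] at hab ⊢; simpa using hab
      have h1 := hjmono (hg hab')
      have h2 : σ⁻¹ (Fin.cast hn (e (g (Fin.cast hlenS' a)))) <
          σ⁻¹ (Fin.cast hn (e (g (Fin.cast hlenS' b)))) := by
        rcases lt_trichotomy (σ⁻¹ (Fin.cast hn (e (g (Fin.cast hlenS' a)))))
            (σ⁻¹ (Fin.cast hn (e (g (Fin.cast hlenS' b))))) with h | h | h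
        · exact h
        · exact absurd ((σ⁻¹ : Equiv.Perm (Fin n)).injective h) (ne_of_lt h1)
        · exfalso
          have h3 := hm _ _ (hgp _) (hgp _) h
          simp only [← Equiv.Perm.mul_apply, mul_inv_cancel, Equiv.Perm.one_apply] at h3
          exact absurd h1 (not_lt_of_gt h3)
      rw [Fin.lt_def] at h2 ⊢
      simpa using h2
    refine ⟨OrderEmbedding.ofStrictMono _ hmono2, ?_⟩
    intro ix
    rw [List.get_ofFn]
    simp only [OrderEmbedding.coe_ofStrictMono]
    rw [List.get_ofFn]
    show f (Fin.cast hn (e (g (Fin.cast hlenS' ix)))) =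
      f (σ (σ⁻¹ (Fin.cast hn (e (g (Fin.cast hlenS' ix))))))
    rw [← Equiv.Perm.mul_apply, mul_inv_cancel, Equiv.Perm.one_apply]
  have hm' : m ≤ lisL (List.ofFn fun i => f (σ i)) := by
    have h4 := le_lisL hS'sub hS'sorted
    rwa [List.length_ofFn] at h4
  omega


def prodW (n : ℕ) (l : List ℕ) : Equiv.Perm (Fin n) := (l.map (simpleT n)).prod

lemma prodW_cons (n a : ℕ) (t : List ℕ) : prodW n (a :: t) = simpleT n a * prodW n t := by
  simp [prodW]

lemma prodW_nil (n : ℕ) : prodW n [] = 1 := rfl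

lemma inc_last_mem (t : List ℕ) : ∀ a : ℕ, List.Chain' (fun x y => y = x + 1) (a :: t) →
    a + t.length ∈ a :: t := by
  induction t with
  | nil => intro a _; simp
  | cons b t' ih =>
    intro a hc
    rw [List.Chain', List.isChain_cons_cons] at hc
    have h1 := ih b hc.2
    rw [hc.1] at h1 ⊢
    simp only [List.length_cons]
    have : a + (t'.length + 1) = a + 1 + t'.length := by omega
    rw [this]
    exact List.mem_cons_of_mem a h1

lemma dec_last_mem (t : List ℕ) : ∀ a : ℕ, List.Chain' (fun x y => x = y + 1) (a :: t) →
    a - t.length ∈ a :: t := by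
  induction t with
  | nil => intro a _; simp
  | cons b t' ih =>
    intro a hc
    rw [List.Chain', List.isChain_cons_cons] at hc
    have h1 := ih b hc.2
    simp only [List.length_cons]
    have : a - (t'.length + 1) = b - t'.length := by omega
    rw [this]
    exact List.mem_cons_of_mem a h1

lemma incEval {n : ℕ} (t : List ℕ) : ∀ a : ℕ, List.Chain' (fun x y => y = x + 1) (a :: t) →
    (∀ i ∈ a :: t, 1 ≤ i ∧ i < n) → ∀ j : Fin n,
    ((prodW n (a :: t)) j : ℕ) =
      if (j : ℕ) = a + t.length then a - 1
      else if a - 1 ≤ (j : ℕ) ∧ (j : ℕ) < a + t.length then (j : ℕ) + 1 else (j : ℕ) := by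
  induction t with
  | nil =>
    intro a _ hv j
    have ha := hv a (by simp)
    rw [prodW_cons, prodW_nil, mul_one, simpleT_val ha.1 ha.2]
    simp only [List.length_nil, Nat.add_zero]
    have hj := j.isLt
    split_ifs <;> omega
  | cons b t' ih =>
    intro a hc hv j
    rw [List.Chain', List.isChain_cons_cons] at hc
    have hb : b = a + 1 := hc.1
    have ha := hv a (by simp)
    have hv' : ∀ i ∈ b :: t', 1 ≤ i ∧ i < n := fun i hi => hv i (List.mem_cons_of_mem a hi)
    have ihb := ih b hc.2 hv' j
    rw [prodW_cons, Equiv.Perm.mul_apply, simpleT_val ha.1 ha.2, ihb]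
    have hj := j.isLt
    simp only [List.length_cons]
    split_ifs <;> omega

lemma decEval {n : ℕ} (t : List ℕ) : ∀ a : ℕ, List.Chain' (fun x y => x = y + 1) (a :: t) →
    (∀ i ∈ a :: t, 1 ≤ i ∧ i < n) → ∀ j : Fin n,
    ((prodW n (a :: t)) j : ℕ) =
      if (j : ℕ) = a - t.length - 1 then a
      else if a - t.length ≤ (j : ℕ) ∧ (j : ℕ) ≤ a then (j : ℕ) - 1 else (j : ℕ) := by
  induction t with
  | nil =>
    intro a _ hv j
    have ha := hv a (by simp)
    rw [prodW_cons, prodW_nil, mul_one, simpleT_val ha.1 ha.2]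
    simp only [List.length_nil, Nat.add_zero]
    have hj := j.isLt
    split_ifs <;> omega
  | cons b t' ih =>
    intro a hc hv j
    rw [List.Chain', List.isChain_cons_cons] at hc
    have hb : a = b + 1 := hc.1
    have ha := hv a (by simp)
    have hv' : ∀ i ∈ b :: t', 1 ≤ i ∧ i < n := fun i hi => hv i (List.mem_cons_of_mem a hi)
    have hlast : 1 ≤ b - t'.length := (hv' _ (dec_last_mem t' b hc.2)).1
    have ihb := ih b hc.2 hv' j
    rw [prodW_cons, Equiv.Perm.mul_apply, simpleT_val ha.1 ha.2, ihb]
    have hj := j.isLt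
    simp only [List.length_cons]
    split_ifs <;> omega


lemma run_step {n : ℕ} (u : Equiv.Perm (Fin n)) (r : List ℕ) (hr : IsRun r)
    (hv : ∀ i ∈ r, 1 ≤ i ∧ i < n) :
    lisL (oneLine u) ≤ lisL (oneLine (u * prodW n r)) + 1 := by
  obtain ⟨hne, hch⟩ := hr
  obtain ⟨a, t, rfl⟩ := List.exists_cons_of_ne_nil hne
  have ha := hv a (by simp)
  have h2 : oneLine (u * prodW n (a :: t)) =
      List.ofFn (fun i => ((fun i : Fin n => (u i : ℕ) + 1) (prodW n (a :: t) i))) := by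
    unfold oneLine
    exact congrArg List.ofFn (funext fun i => by rw [Equiv.Perm.mul_apply])
  have h1 : oneLine u = List.ofFn (fun i : Fin n => (u i : ℕ) + 1) := rfl
  rw [h1, h2]
  cases hch with
  | inl hinc =>
    have hlast : a + t.length < n := (hv _ (inc_last_mem t a hinc)).2
    have heval := incEval t a hinc hv
    refine lemM _ _ ⟨a + t.length, hlast⟩ ?_
    intro i j hi hj hij
    have hi' : (i : ℕ) ≠ a + t.length := fun h => hi (Fin.ext h)
    have hj' : (j : ℕ) ≠ a + t.length := fun h => hj (Fin.ext h)
    rw [Fin.lt_def] at hij ⊢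
    rw [heval i, heval j]
    have hiv := i.isLt
    have hjv := j.isLt
    split_ifs <;> omega
  | inr hdec =>
    have hlast : 1 ≤ a - t.length := (hv _ (dec_last_mem t a hdec)).1
    have heval := decEval t a hdec hv
    refine lemM _ _ ⟨a - t.length - 1, by omega⟩ ?_
    intro i j hi hj hij
    have hi' : (i : ℕ) ≠ a - t.length - 1 := fun h => hi (Fin.ext h)
    have hj' : (j : ℕ) ≠ a - t.length - 1 := fun h => hj (Fin.ext h)
    rw [Fin.lt_def] at hij ⊢
    rw [heval i, heval j]
    have hiv := i.isLt
    have hjv := j.isLt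
    have haa := ha.2
    split_ifs <;> omega

lemma chain_lemma {n : ℕ} (rs : List (List ℕ)) (hruns : ∀ r ∈ rs, IsRun r)
    (hv : ∀ i ∈ rs.flatten, 1 ≤ i ∧ i < n) (u : Equiv.Perm (Fin n)) :
    lisL (oneLine u) ≤ lisL (oneLine (u * prodW n rs.flatten)) + rs.length := by
  induction rs generalizing u with
  | nil =>
    simp only [List.flatten_nil, prodW_nil, mul_one, List.length_nil, Nat.add_zero]
    exact le_refl _
  | cons r rest ih =>
    have hprodsplit : prodW n ((r :: rest).flatten) = prodW n r * prodW n rest.flatten := by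
      simp [prodW]
    have hs1 : lisL (oneLine u) ≤ lisL (oneLine (u * prodW n r)) + 1 :=
      run_step u r (hruns r (by simp))
        (fun i hi => hv i (by simp only [List.flatten_cons, List.mem_append]; exact Or.inl hi))
    have hs2 := ih (fun r' hr' => hruns r' (List.mem_cons_of_mem r hr'))
      (fun i hi => hv i (by simp only [List.flatten_cons, List.mem_append]; exact Or.inr hi))
      (u * prodW n r)
    rw [mul_assoc, ← hprodsplit] at hs2
    simp only [List.length_cons]
    omega

lemma word_list_exists {m : ℕ} (l : List (Equiv.Perm (Fin (m + 1))))
    (hl : ∀ y ∈ l, y ∈ Set.range fun i : Fin m => Equiv.swap i.castSucc i.succ) :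
    ∃ L : List ℕ, (∀ i ∈ L, 1 ≤ i ∧ i < m + 1) ∧ (L.map (simpleT (m + 1))).prod = l.prod := by
  induction l with
  | nil => exact ⟨[], by simp, by simp⟩
  | cons y l' ih =>
    obtain ⟨L', hL'v, hL'p⟩ := ih (fun z hz => hl z (List.mem_cons_of_mem y hz))
    obtain ⟨i, hi⟩ := hl y (by simp)
    refine ⟨(i.val + 1) :: L', ?_, ?_⟩
    · intro x hx
      rcases List.mem_cons.mp hx with h | h
      · subst h; have := i.isLt; omega
      · exact hL'v x h
    · rw [List.map_cons, List.prod_cons, hL'p, List.prod_cons]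
      congr 1
      rw [← hi, simpleT, dif_pos ⟨by omega, by have := i.isLt; omega⟩]
      congr 1

lemma word_exists (n : ℕ) (w : Equiv.Perm (Fin n)) : ∃ l, IsWord n w l := by
  match n, w with
  | 0, w =>
    refine ⟨[], fun i hi => absurd hi List.not_mem_nil, ?_⟩
    simp only [List.map_nil, List.prod_nil]
    exact Subsingleton.elim _ _
  | (m + 1), w =>
    have hw : w ∈ Submonoid.closure
        (Set.range fun i : Fin m => Equiv.swap i.castSucc i.succ) := by
      rw [Equiv.Perm.mclosure_swap_castSucc_succ m]; trivial
    obtain ⟨l, hl, hprod⟩ := Submonoid.exists_list_of_mem_closure hw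
    obtain ⟨L, hLv, hLp⟩ := word_list_exists l hl
    exact ⟨L, hLv, by rw [hLp, hprod]⟩

lemma reduced_exists (n : ℕ) (w : Equiv.Perm (Fin n)) : ∃ l, IsReducedWord n w l := by
  obtain ⟨l0, hl0⟩ := word_exists n w
  have hne : {k | ∃ l, IsWord n w l ∧ l.length = k}.Nonempty := ⟨l0.length, ⟨l0, hl0, rfl⟩⟩
  obtain ⟨l, hl, hlen⟩ := Nat.sInf_mem hne
  exact ⟨l, hl, hlen⟩

lemma runSet_mem (n : ℕ) (w : Equiv.Perm (Fin n)) :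
    ∃ rs : List (List ℕ), rs.length = runStat n w ∧ (∀ r ∈ rs, IsRun r) ∧
      IsReducedWord n w rs.flatten := by
  obtain ⟨l, hl⟩ := reduced_exists n w
  have hflat : ∀ l' : List ℕ, (l'.map (fun i => [i])).flatten = l' := by
    intro l'
    induction l' with
    | nil => rfl
    | cons a t iht => simp [iht]
  have hne : {k | ∃ rs : List (List ℕ), rs.length = k ∧ (∀ r ∈ rs, IsRun r) ∧
      IsReducedWord n w rs.flatten}.Nonempty := by
    refine ⟨l.length, l.map (fun i => [i]), by simp, ?_, ?_⟩
    · intro r hr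
      obtain ⟨i, _, rfl⟩ := List.mem_map.mp hr
      exact ⟨by simp, Or.inl (List.isChain_singleton i)⟩
    · rw [hflat]; exact hl
  exact Nat.sInf_mem hne

end Stmt1Aux

theorem stmt1 (n : ℕ) (w : Equiv.Perm (Fin n)) :
    n - lisLen w ≤ runStat n w := by
  classical
  obtain ⟨rs, hrslen, hruns, hred⟩ := Stmt1Aux.runSet_mem n w
  obtain ⟨⟨hvalid, hprod⟩, -⟩ := hred
  have hid : n ≤ Stmt1Aux.lisL (oneLine (1 : Equiv.Perm (Fin n))) := by
    have hsorted : (oneLine (1 : Equiv.Perm (Fin n))).Pairwise (· < ·) := by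
      rw [oneLine, List.pairwise_ofFn]
      intro i j hij
      simp only [Equiv.Perm.one_apply]
      rw [Fin.lt_def] at hij
      omega
    have h := Stmt1Aux.le_lisL (List.Sublist.refl _) hsorted
    rwa [oneLine, List.length_ofFn] at h
  have hchain := Stmt1Aux.chain_lemma rs hruns hvalid 1
  rw [one_mul] at hchain
  have hw : Stmt1Aux.prodW n rs.flatten = w := hprod
  rw [hw] at hchain
  have hlis : Stmt1Aux.lisL (oneLine w) = lisLen w := rfl
  omega
end

section
/- Multiplying a permutation w in S_n (on the left or right) by the permutation corresponding to a single run changes the length of a longest increasing subsequence of w by at most one. -/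
/-! ### Auxiliary lemmas -/

section Aux

open List

theorem insertIdx_eq_take_cons_drop' {α : Type*} (l : List α) (i : ℕ) (x : α)
    (h : i ≤ l.length) : l.insertIdx i x = l.take i ++ x :: l.drop i := by
  induction l generalizing i with
  | nil =>
    obtain rfl : i = 0 := by simpa using h
    simp
  | cons a t ih =>
    cases i with
    | zero => simp
    | succ i => simp [List.insertIdx_succ_cons, ih i (by simpa using h)]

theorem insertIdx_eraseIdx_self' {α : Type*} (l : List α) (k : ℕ) (h : k < l.length) :
    (l.eraseIdx k).insertIdx k l[k] = l := by
  induction l generalizing k with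
  | nil => simp at h
  | cons a t ih =>
    cases k with
    | zero => simp
    | succ k => simp [List.eraseIdx_cons_succ, List.insertIdx_succ_cons,
        ih k (by simpa using h)]

theorem getElem_insertIdx_of_gt' {α : Type*} (l : List α) (x : α) (m p : ℕ) (hmp : m < p)
    (hp : p - 1 < l.length) (hp2 : p < (l.insertIdx m x).length) :
    (l.insertIdx m x)[p] = l[p - 1] := by
  obtain ⟨j, rfl⟩ : ∃ j, p = m + j + 1 := ⟨p - m - 1, by omega⟩
  have h' : m + j < l.length := by omega
  have := List.getElem_insertIdx_add_succ l x m j h'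
  simpa [Nat.add_sub_cancel] using this

theorem getElem_insertIdx_selfW {α : Type*} (l : List α) (x : α) (m q : ℕ) (hq : q = m)
    (hm : m ≤ l.length) (hqb : q < (l.insertIdx m x).length) : (l.insertIdx m x)[q] = x := by
  subst hq
  exact List.getElem_insertIdx_self hqb

theorem getElem_insertIdx_ltW {α : Type*} (l : List α) (x : α) (m p q : ℕ) (hq : q = p)
    (hpm : p < m) (hpl : p < l.length) (hqb : q < (l.insertIdx m x).length) :
    (l.insertIdx m x)[q] = l[p] := by
  subst hq
  exact List.getElem_insertIdx_of_lt hpm hqb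

theorem getElem_insertIdx_gtW {α : Type*} (l : List α) (x : α) (m p q : ℕ) (hq : q = p + 1)
    (hpm : m ≤ p) (hpl : p < l.length) (hqb : q < (l.insertIdx m x).length) :
    (l.insertIdx m x)[q] = l[p] := by
  subst hq
  have := getElem_insertIdx_of_gt' l x m (p + 1) (by omega) (by simpa using hpl) hqb
  simpa [Nat.add_sub_cancel] using this

theorem getElem_insertIdx_swap (C : List ℕ) (x : ℕ) (c p q : ℕ) (k k' : ℕ) (h1 : 1 ≤ c)
    (hcC : c ≤ C.length)
    (hkk : k = c - 1 ∧ k' = c ∨ k = c ∧ k' = c - 1)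
    (hq : q = if p = c - 1 then c else if p = c then c - 1 else p)
    (hp : p < C.length + 1)
    (hqb : q < (C.insertIdx k x).length) (hpb : p < (C.insertIdx k' x).length) :
    (C.insertIdx k x)[q] = (C.insertIdx k' x)[p] := by
  by_cases hA : p = c - 1
  · rw [if_pos hA] at hq
    rcases hkk with ⟨hk1, hk2⟩ | ⟨hk1, hk2⟩
    · rw [getElem_insertIdx_gtW C x k (c - 1) q (by omega) (by omega) (by omega) hqb,
        getElem_insertIdx_ltW C x k' (c - 1) p (by omega) (by omega) (by omega) hpb]
    · rw [getElem_insertIdx_selfW C x k q (by omega) (by omega) hqb,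
        getElem_insertIdx_selfW C x k' p (by omega) (by omega) hpb]
  · rw [if_neg hA] at hq
    by_cases hB : p = c
    · rw [if_pos hB] at hq
      rcases hkk with ⟨hk1, hk2⟩ | ⟨hk1, hk2⟩
      · rw [getElem_insertIdx_selfW C x k q (by omega) (by omega) hqb,
          getElem_insertIdx_selfW C x k' p (by omega) (by omega) hpb]
      · rw [getElem_insertIdx_ltW C x k (c - 1) q (by omega) (by omega) (by omega) hqb,
          getElem_insertIdx_gtW C x k' (c - 1) p (by omega) (by omega) (by omega) hpb]
    · rw [if_neg hB] at hq
      rcases Nat.lt_or_ge p (c - 1) with hlt | hge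
      · rcases hkk with ⟨hk1, hk2⟩ | ⟨hk1, hk2⟩ <;>
          rw [getElem_insertIdx_ltW C x k p q (by omega) (by omega) (by omega) hqb,
            getElem_insertIdx_ltW C x k' p p rfl (by omega) (by omega) hpb]
      · rcases hkk with ⟨hk1, hk2⟩ | ⟨hk1, hk2⟩ <;>
          rw [getElem_insertIdx_gtW C x k (p - 1) q (by omega) (by omega) (by omega) hqb,
            getElem_insertIdx_gtW C x k' (p - 1) p (by omega) (by omega) (by omega) hpb]

noncomputable def lisL (A : List ℕ) : ℕ :=
  sSup {k | ∃ l : List ℕ, l.Sublist A ∧ l.Pairwise (· < ·) ∧ l.length = k}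

theorem le_lisL {A l : List ℕ} (h : l.Sublist A) (hs : l.Pairwise (· < ·)) :
    l.length ≤ lisL A := by
  apply le_csSup
  · refine ⟨A.length, ?_⟩
    rintro k ⟨l', hl', -, rfl⟩
    exact hl'.length_le
  · exact ⟨l, h, hs, rfl⟩

theorem lisL_le {A : List ℕ} {m : ℕ}
    (h : ∀ l : List ℕ, l.Sublist A → l.Pairwise (· < ·) → l.length ≤ m) : lisL A ≤ m := by
  apply csSup_le
  · exact ⟨0, [], List.nil_sublist _, List.Pairwise.nil, rfl⟩
  · rintro k ⟨l, h1, h2, rfl⟩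
    exact h l h1 h2

theorem lisL_mono {A B : List ℕ} (h : A.Sublist B) : lisL A ≤ lisL B :=
  lisL_le fun l hl hs => le_lisL (hl.trans h) hs

theorem lisL_le_insertIdx (C : List ℕ) (x : ℕ) (i : ℕ) (hi : i ≤ C.length) :
    lisL C ≤ lisL (C.insertIdx i x) := by
  apply lisL_mono
  rw [insertIdx_eq_take_cons_drop' C i x hi]
  conv_lhs => rw [← List.take_append_drop i C]
  exact (List.sublist_cons_self x _).append_left _

theorem lisL_insertIdx_le (C : List ℕ) (x : ℕ) (i : ℕ) (hi : i ≤ C.length) :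
    lisL (C.insertIdx i x) ≤ lisL C + 1 := by
  apply lisL_le
  intro l hl hs
  rw [insertIdx_eq_take_cons_drop' C i x hi] at hl
  obtain ⟨l₁, l₂, rfl, h₁, h₂⟩ := List.sublist_append_iff.mp hl
  rcases List.sublist_cons_iff.mp h₂ with h₂' | ⟨l₃, rfl, h₃⟩
  · have hsub : (l₁ ++ l₂).Sublist C := by
      conv_rhs => rw [← List.take_append_drop i C]
      exact List.Sublist.append h₁ h₂'
    exact (le_lisL hsub hs).trans (Nat.le_succ _)
  · have hsub : (l₁ ++ l₃).Sublist C := by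
      conv_rhs => rw [← List.take_append_drop i C]
      exact List.Sublist.append h₁ h₃
    have hsort : (l₁ ++ l₃).Pairwise (· < ·) :=
      List.Pairwise.sublist ((List.sublist_cons_self x l₃).append_left l₁) hs
    have := le_lisL hsub hsort
    simp only [List.length_append, List.length_cons] at this ⊢
    omega

theorem length_oneLine {n : ℕ} (w : Equiv.Perm (Fin n)) : (oneLine w).length = n := by
  simp [oneLine]

theorem getElem_oneLine {n : ℕ} (w : Equiv.Perm (Fin n)) (p : ℕ)
    (hp : p < (oneLine w).length) :
    (oneLine w)[p] = (w ⟨p, by simpa [oneLine] using hp⟩ : ℕ) + 1 := by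
  simp [oneLine]

theorem simpleT_apply_val {n : ℕ} (c : ℕ) (h1 : 1 ≤ c) (h2 : c < n) (p : Fin n) :
    (simpleT n c p : ℕ) = if (p : ℕ) = c - 1 then c else if (p : ℕ) = c then c - 1 else p := by
  rw [simpleT, dif_pos ⟨h1, h2⟩, Equiv.swap_apply_def]
  by_cases hA : (p : ℕ) = c - 1
  · rw [if_pos (Fin.ext hA), if_pos hA]
  · rw [if_neg (fun h => hA (congrArg Fin.val h)), if_neg hA]
    by_cases hB : (p : ℕ) = c
    · rw [if_pos (Fin.ext hB), if_pos hB]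
    · rw [if_neg (fun h => hB (congrArg Fin.val h)), if_neg hB]

theorem simpleT_inv (n i : ℕ) : (simpleT n i)⁻¹ = simpleT n i := by
  rw [simpleT]
  split_ifs <;> simp

theorem prod_map_simpleT_inv (n : ℕ) (r : List ℕ) :
    ((r.map (simpleT n)).prod)⁻¹ = (r.reverse.map (simpleT n)).prod := by
  induction r with
  | nil => simp
  | cons a t ih =>
    simp [List.prod_cons, mul_inv_rev, ih, simpleT_inv, List.reverse_cons, List.map_append,
      List.prod_append]

theorem oneLine_mul_simpleT {n : ℕ} (v : Equiv.Perm (Fin n)) (c : ℕ) (h1 : 1 ≤ c) (h2 : c < n)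
    (C : List ℕ) (x : ℕ) (hC : C.length + 1 = n) (k k' : ℕ)
    (hkk : k = c - 1 ∧ k' = c ∨ k = c ∧ k' = c - 1)
    (hv : oneLine v = C.insertIdx k x) :
    oneLine (v * simpleT n c) = C.insertIdx k' x := by
  have hk : k ≤ C.length := by omega
  have hk' : k' ≤ C.length := by omega
  apply List.ext_getElem
  · rw [length_oneLine, List.length_insertIdx_of_le_length hk']; omega
  intro p hp1 hp2
  have hp : p < n := by rwa [length_oneLine] at hp1
  have hqn : (simpleT n c ⟨p, hp⟩ : ℕ) < n := (simpleT n c ⟨p, hp⟩).isLt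
  have hbv : (simpleT n c ⟨p, hp⟩ : ℕ) < (oneLine v).length := by
    rw [length_oneLine]; exact hqn
  have step1 : (oneLine (v * simpleT n c))[p] = (oneLine v)[(simpleT n c ⟨p, hp⟩ : ℕ)]'hbv := by
    rw [getElem_oneLine, getElem_oneLine]
    simp [Equiv.Perm.mul_apply]
  rw [step1, List.getElem_of_eq hv hbv]
  exact getElem_insertIdx_swap C x c p _ k k' h1 (by omega) hkk
    (simpleT_apply_val c h1 h2 ⟨p, hp⟩) (by omega)
    (by rw [List.length_insertIdx_of_le_length hk]; omega) hp2

theorem run_inc {n : ℕ} : ∀ (r : List ℕ) (a c : ℕ) (v : Equiv.Perm (Fin n)) (C : List ℕ)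
    (x : ℕ), List.Chain' (fun p q => q = p + 1) (a :: r) →
    (∀ i ∈ a :: r, 1 ≤ i ∧ i < n) → C.length + 1 = n →
    (a :: r).getLast? = some c → oneLine v = C.insertIdx (a - 1) x →
    oneLine (v * ((a :: r).map (simpleT n)).prod) = C.insertIdx c x := by
  intro r
  induction r with
  | nil =>
    intro a c v C x hch hmem hC hlast hone
    obtain rfl : a = c := by simpa using hlast
    obtain ⟨h1, h2⟩ := hmem a List.mem_cons_self
    have := oneLine_mul_simpleT v a h1 h2 C x hC (a - 1) a (Or.inl ⟨rfl, rfl⟩) hone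
    simpa using this
  | cons b r ih =>
    intro a c v C x hch hmem hC hlast hone
    obtain ⟨hab, hch'⟩ := List.isChain_cons_cons.mp hch
    obtain ⟨h1, h2⟩ := hmem a List.mem_cons_self
    have step : oneLine (v * simpleT n a) = C.insertIdx a x :=
      oneLine_mul_simpleT v a h1 h2 C x hC (a - 1) a (Or.inl ⟨rfl, rfl⟩) hone
    have hstep' : oneLine (v * simpleT n a) = C.insertIdx (b - 1) x := by
      rw [step]; congr 1; omega
    have := ih b c (v * simpleT n a) C x hch'
      (fun i hi => hmem i (List.mem_cons_of_mem a hi)) hC (by simpa using hlast) hstep'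
    rw [List.map_cons, List.prod_cons, ← mul_assoc]
    exact this

theorem run_dec {n : ℕ} : ∀ (r : List ℕ) (a c : ℕ) (v : Equiv.Perm (Fin n)) (C : List ℕ)
    (x : ℕ), List.Chain' (fun p q => p = q + 1) (a :: r) →
    (∀ i ∈ a :: r, 1 ≤ i ∧ i < n) → C.length + 1 = n →
    (a :: r).getLast? = some c → oneLine v = C.insertIdx a x →
    oneLine (v * ((a :: r).map (simpleT n)).prod) = C.insertIdx (c - 1) x := by
  intro r
  induction r with
  | nil =>
    intro a c v C x hch hmem hC hlast hone
    obtain rfl : a = c := by simpa using hlast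
    obtain ⟨h1, h2⟩ := hmem a List.mem_cons_self
    have := oneLine_mul_simpleT v a h1 h2 C x hC a (a - 1) (Or.inr ⟨rfl, rfl⟩) hone
    simpa using this
  | cons b r ih =>
    intro a c v C x hch hmem hC hlast hone
    obtain ⟨hab, hch'⟩ := List.isChain_cons_cons.mp hch
    obtain ⟨h1, h2⟩ := hmem a List.mem_cons_self
    have step : oneLine (v * simpleT n a) = C.insertIdx (a - 1) x :=
      oneLine_mul_simpleT v a h1 h2 C x hC a (a - 1) (Or.inr ⟨rfl, rfl⟩) hone
    have hstep' : oneLine (v * simpleT n a) = C.insertIdx b x := by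
      rw [step]; congr 1; omega
    have := ih b c (v * simpleT n a) C x hch'
      (fun i hi => hmem i (List.mem_cons_of_mem a hi)) hC (by simpa using hlast) hstep'
    rw [List.map_cons, List.prod_cons, ← mul_assoc]
    exact this

theorem run_move {n : ℕ} (v : Equiv.Perm (Fin n)) (r : List ℕ) (hr : IsRun r)
    (hv : ∀ i ∈ r, 1 ≤ i ∧ i < n) :
    ∃ (C : List ℕ) (x k k' : ℕ), k ≤ C.length ∧ k' ≤ C.length ∧
      oneLine v = C.insertIdx k x ∧
      oneLine (v * (r.map (simpleT n)).prod) = C.insertIdx k' x := by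
  obtain ⟨hne, hch⟩ := hr
  obtain ⟨a, r', rfl⟩ := List.exists_cons_of_ne_nil hne
  obtain ⟨ha1, ha2⟩ := hv a List.mem_cons_self
  have hlen : (oneLine v).length = n := length_oneLine v
  have hne' : (a :: r') ≠ [] := List.cons_ne_nil a r'
  set c := (a :: r').getLast hne' with hcdef
  have hlast : (a :: r').getLast? = some c := List.getLast?_eq_getLast_of_ne_nil hne'
  obtain ⟨hc1, hc2⟩ := hv c (List.getLast_mem hne')
  rcases hch with hinc | hdec
  · have hb : a - 1 < (oneLine v).length := by omega
    have hClen : (((oneLine v).eraseIdx (a - 1)).length) + 1 = n := by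
      rw [List.length_eraseIdx, if_pos hb, hlen]; omega
    have hone : oneLine v = ((oneLine v).eraseIdx (a - 1)).insertIdx (a - 1) (oneLine v)[a - 1] :=
      (insertIdx_eraseIdx_self' _ _ hb).symm
    exact ⟨(oneLine v).eraseIdx (a - 1), (oneLine v)[a - 1], a - 1, c, by omega, by omega, hone,
      run_inc r' a c v _ _ hinc hv hClen hlast hone⟩
  · have hb : a < (oneLine v).length := by omega
    have hClen : (((oneLine v).eraseIdx a).length) + 1 = n := by
      rw [List.length_eraseIdx, if_pos hb, hlen]; omega
    have hone : oneLine v = ((oneLine v).eraseIdx a).insertIdx a (oneLine v)[a] :=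
      (insertIdx_eraseIdx_self' _ _ hb).symm
    exact ⟨(oneLine v).eraseIdx a, (oneLine v)[a], a, c - 1, by omega, by omega, hone,
      run_dec r' a c v _ _ hdec hv hClen hlast hone⟩

theorem run_bounds {n : ℕ} (v : Equiv.Perm (Fin n)) (r : List ℕ) (hr : IsRun r)
    (hv : ∀ i ∈ r, 1 ≤ i ∧ i < n) :
    lisLen (v * (r.map (simpleT n)).prod) ≤ lisLen v + 1 ∧
      lisLen v ≤ lisLen (v * (r.map (simpleT n)).prod) + 1 := by
  obtain ⟨C, x, k, k', hk, hk', h1, h2⟩ := run_move v r hr hv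
  have key1 : lisLen (v * (r.map (simpleT n)).prod) = lisL (C.insertIdx k' x) := by
    show lisL (oneLine _) = _
    rw [h2]
  have key2 : lisLen v = lisL (C.insertIdx k x) := by
    show lisL (oneLine v) = _
    rw [h1]
  rw [key1, key2]
  constructor
  · exact (lisL_insertIdx_le C x k' hk').trans
      (Nat.add_le_add_right (lisL_le_insertIdx C x k hk) 1)
  · exact (lisL_insertIdx_le C x k hk).trans
      (Nat.add_le_add_right (lisL_le_insertIdx C x k' hk') 1)

theorem lisSet_eq {n : ℕ} (w : Equiv.Perm (Fin n)) :
    {k | ∃ l : List ℕ, l.Sublist (oneLine w) ∧ l.Pairwise (· < ·) ∧ l.length = k} =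
    {k | ∃ g : Fin k → Fin n, StrictMono g ∧ StrictMono (fun i => w (g i))} := by
  ext k
  simp only [Set.mem_setOf_eq]
  constructor
  · rintro ⟨l, hl, hs, rfl⟩
    obtain ⟨f, hf⟩ := List.sublist_iff_exists_orderEmbedding_getElem?_eq.mp hl
    have hbound : ∀ i, i < l.length → f i < n := by
      intro i hi
      have h := hf i
      rw [List.getElem?_eq_getElem hi] at h
      by_contra hge
      rw [List.getElem?_eq_none (by rw [length_oneLine]; omega)] at h
      simp at h
    have hval : ∀ (i : ℕ) (hi : i < l.length) (h : f i < n),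
        l[i] = (w ⟨f i, h⟩ : ℕ) + 1 := by
      intro i hi h
      have heq := hf i
      rw [List.getElem?_eq_getElem hi,
        List.getElem?_eq_getElem (by rw [length_oneLine]; exact h)] at heq
      rw [Option.some_inj] at heq
      rw [heq, getElem_oneLine]
    refine ⟨fun i => ⟨f i, hbound i i.isLt⟩, ?_, ?_⟩
    · intro i j hij
      exact f.strictMono hij
    · intro i j hij
      have h1 : l[(i : ℕ)] < l[(j : ℕ)] :=
        List.pairwise_iff_getElem.mp hs i j i.isLt j.isLt hij
      rw [hval i i.isLt (hbound i i.isLt), hval j j.isLt (hbound j j.isLt)] at h1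
      exact Fin.lt_def.mpr (Nat.lt_of_succ_lt_succ h1)
  · rintro ⟨g, hg, hwg⟩
    refine ⟨List.ofFn (fun i : Fin k => (w (g i) : ℕ) + 1), ?_, ?_, by simp⟩
    · rw [List.sublist_iff_exists_orderEmbedding_getElem?_eq]
      have hmono : StrictMono (fun m => if h : m < k then ((g ⟨m, h⟩ : ℕ)) else m + n) := by
        intro m₁ m₂ hlt
        dsimp only
        split_ifs with ha hb hb
        · exact Fin.lt_def.mp (hg (show (⟨m₁, ha⟩ : Fin k) < ⟨m₂, hb⟩ from hlt))
        · exact lt_of_lt_of_le (g ⟨m₁, ha⟩).isLt (Nat.le_add_left n m₂)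
        · exact absurd (hlt.trans hb) ha
        · omega
      refine ⟨OrderEmbedding.ofStrictMono _ hmono, ?_⟩
      intro ix
      have hcoe : (OrderEmbedding.ofStrictMono _ hmono) ix
          = if h : ix < k then ((g ⟨ix, h⟩ : ℕ)) else ix + n := rfl
      rw [hcoe]
      rcases lt_or_ge ix k with hix | hix
      · rw [dif_pos hix,
          List.getElem?_eq_getElem (by simpa using hix),
          List.getElem?_eq_getElem (by rw [length_oneLine]; exact (g ⟨ix, hix⟩).isLt)]
        simp [List.getElem_ofFn, getElem_oneLine]
      · rw [dif_neg (by omega),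
          List.getElem?_eq_none (by simpa using hix),
          List.getElem?_eq_none (by rw [length_oneLine]; omega)]
    · apply List.pairwise_iff_getElem.mpr
      intro i j hi hj hij
      simp only [List.getElem_ofFn]
      exact Nat.add_lt_add_right (Fin.lt_def.mp
        (hwg (show (⟨i, by simpa using hi⟩ : Fin k) < ⟨j, by simpa using hj⟩ from hij))) 1

theorem lisLen_inv {n : ℕ} (w : Equiv.Perm (Fin n)) : lisLen w⁻¹ = lisLen w := by
  unfold lisLen
  rw [show {k | ∃ l : List ℕ, l.Sublist (oneLine w⁻¹) ∧ l.Pairwise (· < ·) ∧ l.length = k}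
      = {k | ∃ g : Fin k → Fin n, StrictMono g ∧ StrictMono (fun i => w⁻¹ (g i))}
    from lisSet_eq w⁻¹,
    show {k | ∃ l : List ℕ, l.Sublist (oneLine w) ∧ l.Pairwise (· < ·) ∧ l.length = k}
      = {k | ∃ g : Fin k → Fin n, StrictMono g ∧ StrictMono (fun i => w (g i))}
    from lisSet_eq w]
  congr 1
  ext k
  simp only [Set.mem_setOf_eq]
  constructor
  · rintro ⟨g, hg, hwg⟩
    exact ⟨fun i => w⁻¹ (g i), hwg, by simpa using hg⟩
  · rintro ⟨g, hg, hwg⟩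
    exact ⟨fun i => w (g i), hwg, by simpa using hg⟩

end Aux

theorem stmt2 (n : ℕ) (w : Equiv.Perm (Fin n)) (r : List ℕ)
    (hr : IsRun r) (hv : ∀ i ∈ r, 1 ≤ i ∧ i < n) :
    (lisLen (w * (r.map (simpleT n)).prod) ≤ lisLen w + 1 ∧
      lisLen w ≤ lisLen (w * (r.map (simpleT n)).prod) + 1) ∧
    (lisLen ((r.map (simpleT n)).prod * w) ≤ lisLen w + 1 ∧
      lisLen w ≤ lisLen ((r.map (simpleT n)).prod * w) + 1) := by
  constructor
  · exact run_bounds w r hr hv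
  · have hrrev : IsRun r.reverse := by
      obtain ⟨hne, hch⟩ := hr
      refine ⟨by simpa using hne, ?_⟩
      rcases hch with h | h
      · right
        unfold List.Chain' at h ⊢
        rw [List.isChain_reverse]
        exact h
      · left
        unfold List.Chain' at h ⊢
        rw [List.isChain_reverse]
        exact h
    have hvrev : ∀ i ∈ r.reverse, 1 ≤ i ∧ i < n := fun i hi => hv i (List.mem_reverse.mp hi)
    have hb := run_bounds w⁻¹ r.reverse hrrev hvrev
    have heq : (r.map (simpleT n)).prod * w
        = (w⁻¹ * ((r.reverse.map (simpleT n)).prod))⁻¹ := by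
      rw [mul_inv_rev, inv_inv, ← prod_map_simpleT_inv, inv_inv]
    rw [heq, lisLen_inv, show lisLen w = lisLen w⁻¹ from (lisLen_inv w).symm]
    exact hb
end

section
/- For any nonidentity permutation w in S_n, there exists a run r (a word of consecutive integers, increasing or decreasing) such that either wr or rw (product of w with the permutation given by r) has Coxeter length ℓ(w) − (length of r), and has a strictly longer longest increasing subsequence than w. -/
namespace Equiv.Perm

theorem apply_inv_self {α : Type*} (f : Equiv.Perm α) (x : α) : f (f⁻¹ x) = x :=
  Equiv.apply_symm_apply f x

theorem inv_apply_self {α : Type*} (f : Equiv.Perm α) (x : α) : f⁻¹ (f x) = x :=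
  Equiv.symm_apply_apply f x

end Equiv.Perm

namespace St3

open Equiv List

variable {n : ℕ}

def invSet (u : Equiv.Perm (Fin n)) : Finset (Fin n × Fin n) :=
  Finset.univ.filter (fun p => p.1 < p.2 ∧ u p.2 < u p.1)

def invNum (u : Equiv.Perm (Fin n)) : ℕ := (invSet u).card

lemma mem_invSet {u : Equiv.Perm (Fin n)} {p : Fin n × Fin n} :
    p ∈ invSet u ↔ p.1 < p.2 ∧ u p.2 < u p.1 := by
  simp [invSet]

lemma invNum_one : invNum (1 : Equiv.Perm (Fin n)) = 0 := by
  simp only [invNum, Finset.card_eq_zero]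
  ext p
  simp [mem_invSet, le_of_lt, not_lt_of_ge, le_of_lt]
  intro h
  exact le_of_lt h

lemma invNum_inv (u : Equiv.Perm (Fin n)) : invNum u⁻¹ = invNum u := by
  unfold invNum
  apply Finset.card_bij' (fun p _ => (u⁻¹ p.2, u⁻¹ p.1)) (fun p _ => (u p.2, u p.1))
  · intro p hp
    rw [mem_invSet] at hp ⊢
    simp only
    exact ⟨hp.2, by simp [hp.1]⟩
  · intro p hp
    rw [mem_invSet] at hp ⊢
    simp only
    exact ⟨hp.2, by simp [hp.1]⟩
  · intro p hp; simp
  · intro p hp; simp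

lemma swap_val (p q z : Fin n) : ((Equiv.swap p q z : Fin n) : ℕ) =
    if (z : ℕ) = (p : ℕ) then (q : ℕ) else if (z : ℕ) = (q : ℕ) then (p : ℕ) else (z : ℕ) := by
  rw [Equiv.swap_apply_def]
  by_cases h1 : z = p
  · subst h1; simp
  · have h1' : (z : ℕ) ≠ (p : ℕ) := fun h => h1 (Fin.ext h)
    by_cases h2 : z = q
    · subst h2; simp [h1, h1']
    · have h2' : (z : ℕ) ≠ (q : ℕ) := fun h => h2 (Fin.ext h)
      simp [h1, h2, h1', h2']

lemma swap_lt_swap {p q x y : Fin n} (hq : (q : ℕ) = p + 1) (hxy : x < y)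
    (hne : ¬(x = p ∧ y = q)) : Equiv.swap p q x < Equiv.swap p q y := by
  have hne' : ¬((x : ℕ) = (p : ℕ) ∧ (y : ℕ) = (q : ℕ)) := by
    intro h; exact hne ⟨Fin.ext h.1, Fin.ext h.2⟩
  rw [Fin.lt_def] at hxy ⊢
  rw [swap_val, swap_val]
  split_ifs <;> omega

lemma swap_pair_ne {p q x y : Fin n} (hq : (q : ℕ) = p + 1) (hxy : x < y) :
    ¬(Equiv.swap p q x = p ∧ Equiv.swap p q y = q) := by
  rintro ⟨h1, h2⟩
  have e1 : x = q := by
    have := congrArg (Equiv.swap p q) h1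
    simpa [Equiv.swap_apply_self, Equiv.swap_apply_left] using this
  have e2 : y = p := by
    have := congrArg (Equiv.swap p q) h2
    simpa [Equiv.swap_apply_self, Equiv.swap_apply_right] using this
  subst e1; subst e2
  rw [Fin.lt_def] at hxy; omega

lemma erase_card_eq (u : Equiv.Perm (Fin n)) (p q : Fin n) (hq : (q : ℕ) = p + 1) :
    ((invSet (u * Equiv.swap p q)).erase (p, q)).card = ((invSet u).erase (p, q)).card := by
  have hss : ∀ z : Fin n, Equiv.swap p q (Equiv.swap p q z) = z := fun z =>
    Equiv.swap_apply_self p q z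
  apply Finset.card_bij' (fun a _ => (Equiv.swap p q a.1, Equiv.swap p q a.2))
    (fun a _ => (Equiv.swap p q a.1, Equiv.swap p q a.2))
  · rintro ⟨x, y⟩ ha
    rw [Finset.mem_erase, mem_invSet] at ha ⊢
    obtain ⟨hne, hxy, hval⟩ := ha
    have hne' : ¬(x = p ∧ y = q) := by
      intro h; exact hne (by simp [Prod.ext_iff, h.1, h.2])
    refine ⟨?_, swap_lt_swap hq hxy hne', ?_⟩
    · intro h
      rw [Prod.ext_iff] at h
      exact swap_pair_ne hq hxy ⟨h.1, h.2⟩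
    · simpa [Equiv.Perm.mul_apply] using hval
  · rintro ⟨x, y⟩ ha
    rw [Finset.mem_erase, mem_invSet] at ha ⊢
    obtain ⟨hne, hxy, hval⟩ := ha
    have hne' : ¬(x = p ∧ y = q) := by
      intro h; exact hne (by simp [Prod.ext_iff, h.1, h.2])
    refine ⟨?_, swap_lt_swap hq hxy hne', ?_⟩
    · intro h
      rw [Prod.ext_iff] at h
      exact swap_pair_ne hq hxy ⟨h.1, h.2⟩
    · simpa [Equiv.Perm.mul_apply, hss] using hval
  · rintro ⟨x, y⟩ _; simp [hss]
  · rintro ⟨x, y⟩ _; simp [hss]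

lemma invNum_mul_swap_of_descent (u : Equiv.Perm (Fin n)) (p q : Fin n)
    (hq : (q : ℕ) = p + 1) (hd : u q < u p) :
    invNum (u * Equiv.swap p q) + 1 = invNum u := by
  have hpq : p < q := by rw [Fin.lt_def]; omega
  have h1 : (p, q) ∈ invSet u := mem_invSet.2 ⟨hpq, hd⟩
  have h2 : (p, q) ∉ invSet (u * Equiv.swap p q) := by
    rw [mem_invSet]
    simp only [Equiv.Perm.mul_apply, Equiv.swap_apply_left, Equiv.swap_apply_right]
    exact fun h => absurd h.2 (not_lt_of_gt hd)
  unfold invNum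
  rw [← Finset.erase_eq_of_notMem h2, erase_card_eq u p q hq,
    Finset.card_erase_add_one h1]

lemma invNum_le_mul_swap (u : Equiv.Perm (Fin n)) (p q : Fin n) (hq : (q : ℕ) = p + 1) :
    invNum u ≤ invNum (u * Equiv.swap p q) + 1 := by
  unfold invNum
  calc (invSet u).card ≤ ((invSet u).erase (p, q)).card + 1 := by
        rcases Finset.decidableMem (p, q) (invSet u) with h | h
        · rw [Finset.erase_eq_of_notMem h]; omega
        · rw [Finset.card_erase_add_one h]
    _ = ((invSet (u * Equiv.swap p q)).erase (p, q)).card + 1 := by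
        rw [erase_card_eq u p q hq]
    _ ≤ (invSet (u * Equiv.swap p q)).card + 1 := by
        have := Finset.card_erase_le (s := invSet (u * Equiv.swap p q)) (a := (p, q))
        omega

lemma simpleT_mul_self (i : ℕ) : simpleT n i * simpleT n i = 1 := by
  unfold simpleT
  split_ifs
  · exact Equiv.swap_mul_self _ _
  · exact one_mul 1

lemma simpleT_inv (i : ℕ) : (simpleT n i)⁻¹ = simpleT n i := by
  unfold simpleT
  split_ifs
  · simp
  · simp

lemma invNum_le_mul_simpleT (u : Equiv.Perm (Fin n)) (i : ℕ) :
    invNum u ≤ invNum (u * simpleT n i) + 1 := by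
  unfold simpleT
  split_ifs with h
  · exact invNum_le_mul_swap u _ _ (by simp; omega)
  · rw [mul_one]; omega

lemma invNum_le_word (l : List ℕ) : ∀ (u : Equiv.Perm (Fin n)),
    (l.map (simpleT n)).prod = u → invNum u ≤ l.length := by
  induction l using List.reverseRecOn with
  | nil => intro u hu; simp at hu; simp [← hu, invNum_one]
  | append_singleton l i ih =>
    intro u hu
    rw [List.map_append, List.prod_append] at hu
    simp only [List.map_cons, List.map_nil, List.prod_cons, List.prod_nil, mul_one] at hu
    have hv : ((l.map (simpleT n)).prod : Equiv.Perm (Fin n)) = u * simpleT n i := by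
      rw [← hu, mul_assoc, simpleT_mul_self, mul_one]
    calc invNum u ≤ invNum (u * simpleT n i) + 1 := invNum_le_mul_simpleT u i
      _ ≤ l.length + 1 := by have := ih _ hv; omega
      _ = (l ++ [i]).length := by simp

lemma simpleT_eq_swap {j : ℕ} (h : j + 1 < n) :
    simpleT n (j + 1) = Equiv.swap ⟨j, by omega⟩ ⟨j + 1, h⟩ := by
  unfold simpleT
  rw [dif_pos ⟨by omega, h⟩]
  congr 1

lemma exists_descent (u : Equiv.Perm (Fin n)) (hu : u ≠ 1) :
    ∃ j : ℕ, ∃ h : j + 1 < n, u ⟨j + 1, h⟩ < u ⟨j, by omega⟩ := by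
  by_contra hcon
  push_neg at hcon
  -- adjacent increase
  have hadj : ∀ (j : ℕ) (h : j + 1 < n), u ⟨j, by omega⟩ < u ⟨j + 1, h⟩ := by
    intro j h
    rcases lt_trichotomy (u ⟨j, by omega⟩) (u ⟨j + 1, h⟩) with h1 | h1 | h1
    · exact h1
    · exfalso
      have : (⟨j, by omega⟩ : Fin n) = ⟨j + 1, h⟩ := u.injective h1
      simp [Fin.ext_iff] at this
    · exact absurd h1 (not_lt_of_ge (hcon j h))
  -- strict monotone over gaps
  have hmono : ∀ (d j : ℕ) (h : j + d + 1 < n), u ⟨j, by omega⟩ < u ⟨j + d + 1, h⟩ := by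
    intro d
    induction d with
    | zero => intro j h; exact hadj j h
    | succ m ih =>
      intro j h
      have h1 : j + m + 1 < n := by omega
      calc u ⟨j, by omega⟩ < u ⟨j + m + 1, h1⟩ := ih j h1
        _ < u ⟨j + m + 1 + 1, by omega⟩ := hadj (j + m + 1) (by omega)
      -- note : j + (m+1) + 1 = j + m + 1 + 1
  have hsm : StrictMono u := by
    intro a b hab
    have : (b : ℕ) = a + ((b : ℕ) - a - 1) + 1 := by
      rw [Fin.lt_def] at hab; omega
    have h2 := hmono ((b : ℕ) - a - 1) a (by rw [← this]; exact b.isLt)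
    convert h2 using 2
    · rfl
    exact Fin.ext this
  -- pointwise lower bound for a strict mono map
  have hlb : ∀ (f : Fin n → Fin n), StrictMono f → ∀ (m : ℕ) (h : m < n), m ≤ (f ⟨m, h⟩ : ℕ) := by
    intro f hf m
    induction m with
    | zero => intro h; omega
    | succ k ih =>
      intro h
      have h1 : k < n := by omega
      have := hf (show (⟨k, h1⟩ : Fin n) < ⟨k + 1, h⟩ by simp [Fin.lt_def])
      have := ih h1
      rw [Fin.lt_def] at *
      omega
  have hsminv : StrictMono (u⁻¹ : Equiv.Perm (Fin n)) := by
    intro a b hab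
    rcases lt_trichotomy (u⁻¹ a) (u⁻¹ b) with h1 | h1 | h1
    · exact h1
    · exfalso; have := congrArg u h1; simp at this; exact absurd this (ne_of_lt hab)
    · exfalso; have := hsm h1; simp at this; exact absurd hab (not_lt_of_gt this)
  apply hu
  ext x
  have h1 : (x : ℕ) ≤ (u x : ℕ) := by
    have := hlb u hsm x x.isLt
    simpa using this
  have h2 : (u x : ℕ) ≤ (x : ℕ) := by
    have := hlb (u⁻¹ : Equiv.Perm (Fin n)) hsminv (u x) (u x).isLt
    simp only [Fin.eta] at this
    simpa using this
  simp only [Equiv.Perm.coe_one, id_eq]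
  omega

lemma exists_word_invNum (u : Equiv.Perm (Fin n)) :
    ∃ l, IsWord n u l ∧ l.length = invNum u := by
  generalize hk : invNum u = k
  induction k using Nat.strong_induction_on generalizing u with
  | _ k IH =>
    by_cases hu : u = 1
    · subst hu
      exact ⟨[], ⟨fun i hi => absurd hi List.not_mem_nil, by simp⟩, by
        rw [← hk, invNum_one]; simp⟩
    · obtain ⟨j, h, hd⟩ := exists_descent u hu
      set t := Equiv.swap (⟨j, by omega⟩ : Fin n) ⟨j + 1, h⟩ with ht
      have hstep : invNum (u * t) + 1 = invNum u :=
        invNum_mul_swap_of_descent u _ _ (by simp) hd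
      obtain ⟨l, ⟨hlmem, hlprod⟩, hllen⟩ := IH (invNum (u * t)) (by omega) (u * t) rfl
      refine ⟨l ++ [j + 1], ⟨?_, ?_⟩, ?_⟩
      · intro i hi
        rcases List.mem_append.mp hi with h1 | h1
        · exact hlmem i h1
        · simp at h1; omega
      · rw [List.map_append, List.prod_append]
        simp only [List.map_cons, List.map_nil, List.prod_cons, List.prod_nil, mul_one]
        rw [hlprod, simpleT_eq_swap h, ← ht, mul_assoc, Equiv.swap_mul_self, mul_one]
      · simp [hllen]; omega

lemma coxLength_eq_invNum (u : Equiv.Perm (Fin n)) : coxLength n u = invNum u := by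
  obtain ⟨l, hw, hl⟩ := exists_word_invNum u
  apply _root_.le_antisymm
  · exact Nat.sInf_le ⟨l, hw, hl⟩
  · refine le_csInf ⟨invNum u, ?_⟩ ?_
    · exact ⟨l, hw, hl⟩
    rintro k ⟨l', hw', hl'⟩
    rw [← hl']
    exact invNum_le_word l' u hw'.2

def runListR (a b : ℕ) : List ℕ := (List.range' (a + 1) (b - a)).reverse

def cR (n a b : ℕ) : Equiv.Perm (Fin n) := ((runListR a b).map (simpleT n)).prod

lemma runListR_succ (a d : ℕ) :
    runListR a (a + d + 1) = (a + d + 1) :: runListR a (a + d) := by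
  unfold runListR
  have h1 : a + d + 1 - a = (a + d - a) + 1 := by omega
  rw [h1, List.range'_concat, List.reverse_append]
  simp [Nat.add_sub_cancel_left]
  omega

lemma cR_succ (a d : ℕ) : cR n a (a + d + 1) = simpleT n (a + d + 1) * cR n a (a + d) := by
  unfold cR
  rw [runListR_succ, List.map_cons, List.prod_cons]

lemma cR_self (a : ℕ) : cR n a a = 1 := by
  unfold cR runListR
  simp

lemma cR_apply (a d : ℕ) (h : a + d < n) (x : ℕ) (hx : x < n) :
    cR n a (a + d) ⟨x, hx⟩ =
      if x = a ∧ 0 < d then ⟨a + d, h⟩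
      else if a < x ∧ x ≤ a + d then ⟨x - 1, by omega⟩
      else ⟨x, hx⟩ := by
  induction d with
  | zero =>
    show cR n a a ⟨x, hx⟩ = _
    rw [cR_self]
    simp only [lt_irrefl, and_false, if_false]
    have : ¬(a < x ∧ x ≤ a + 0) := by omega
    rw [if_neg this]
    rfl
  | succ m ih =>
    show cR n a (a + m + 1) ⟨x, hx⟩ = _
    rw [cR_succ, Equiv.Perm.mul_apply, ih (by omega)]
    have hs : simpleT n (a + m + 1) = Equiv.swap ⟨a + m, by omega⟩ ⟨a + m + 1, h⟩ :=
      simpleT_eq_swap (by omega)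
    rw [hs]
    by_cases h1 : x = a ∧ 0 < m
    · rw [if_pos h1, if_pos (show x = a ∧ 0 < m + 1 from ⟨h1.1, by omega⟩)]
      rw [Equiv.swap_apply_left]
      rfl
    · rw [if_neg h1]
      by_cases h2 : a < x ∧ x ≤ a + m
      · rw [if_pos h2, if_neg (show ¬(x = a ∧ 0 < m + 1) by omega),
          if_pos (show a < x ∧ x ≤ a + (m + 1) by omega)]
        apply Fin.ext
        rw [swap_val]
        simp only [Fin.val_mk]
        split_ifs <;> omega
      · rw [if_neg h2]
        by_cases h3 : x = a ∧ 0 < m + 1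
        · -- x = a, m = 0 (since ¬(x = a ∧ 0 < m))
          have hxa : x = a := h3.1
          have hm : m = 0 := by
            by_contra hm
            exact h1 ⟨hxa, by omega⟩
          rw [if_pos h3]
          apply Fin.ext
          rw [swap_val]
          simp only [Fin.val_mk]
          split_ifs <;> omega
        · rw [if_neg h3]
          by_cases h4 : a < x ∧ x ≤ a + (m + 1)
          · -- x = a + m + 1
            have hx' : x = a + m + 1 := by omega
            rw [if_pos h4]
            apply Fin.ext
            rw [swap_val]
            simp only [Fin.val_mk]
            split_ifs <;> omega
          · rw [if_neg h4]
            apply Fin.ext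
            rw [swap_val]
            simp only [Fin.val_mk]
            split_ifs <;> omega

lemma invNum_mul_cR (a d : ℕ) (h : a + d < n) :
    ∀ (u : Equiv.Perm (Fin n)),
      (∀ (x : ℕ) (hx : x < n), a ≤ x → x < a + d → u ⟨a + d, h⟩ < u ⟨x, hx⟩) →
      invNum (u * cR n a (a + d)) + d = invNum u := by
  induction d with
  | zero =>
    intro u _
    show invNum (u * cR n a a) + 0 = invNum u
    rw [cR_self, mul_one]
    omega
  | succ m ih =>
    intro u hmin
    show invNum (u * cR n a (a + m + 1)) + (m + 1) = invNum u
    rw [cR_succ, ← mul_assoc]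
    have hs : simpleT n (a + m + 1) = Equiv.swap ⟨a + m, by omega⟩ ⟨a + m + 1, h⟩ :=
      simpleT_eq_swap (by omega)
    set t := Equiv.swap (⟨a + m, by omega⟩ : Fin n) ⟨a + m + 1, h⟩ with htdef
    have hd : u ⟨a + m + 1, h⟩ < u ⟨a + m, by omega⟩ :=
      hmin (a + m) (by omega) (by omega) (by omega)
    have hstep : invNum (u * t) + 1 = invNum u :=
      invNum_mul_swap_of_descent u _ _ (by simp) hd
    have happ : ∀ (x : ℕ) (hx : x < n), a ≤ x → x < a + m →
        (u * t) ⟨a + m, by omega⟩ < (u * t) ⟨x, hx⟩ := by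
      intro x hx h1 h2
      have e1 : (u * t) ⟨a + m, by omega⟩ = u ⟨a + m + 1, h⟩ := by
        rw [Equiv.Perm.mul_apply, htdef, Equiv.swap_apply_left]
      have e2 : (u * t) ⟨x, hx⟩ = u ⟨x, hx⟩ := by
        rw [Equiv.Perm.mul_apply, htdef]
        congr 1
        apply Fin.ext
        rw [swap_val]
        simp only [Fin.val_mk]
        split_ifs <;> omega
      rw [e1, e2]
      exact hmin x hx h1 (by omega)
    have := ih (by omega) (u * t) happ
    rw [hs]
    omega

lemma prod_map_simpleT_reverse (l : List ℕ) :
    ((l.reverse.map (simpleT n)).prod) = ((l.map (simpleT n)).prod)⁻¹ := by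
  induction l with
  | nil => simp
  | cons i l ih =>
    rw [List.reverse_cons, List.map_append, List.prod_append, ih]
    simp only [List.map_cons, List.map_nil, List.prod_cons, List.prod_nil, mul_one]
    rw [mul_inv_rev, simpleT_inv]

lemma chain'_range' (s k : ℕ) : List.Chain' (fun a b => b = a + 1) (List.range' s k) := by
  induction k generalizing s with
  | zero => exact List.isChain_nil
  | succ m ih =>
    rw [List.range'_succ]
    rw [List.Chain', List.isChain_cons]
    refine ⟨?_, ih (s + 1)⟩
    intro y hy
    cases m with
    | zero => simp at hy
    | succ m' =>
      rw [List.range'_succ] at hy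
      simp at hy
      omega

lemma isRun_runListR (a b : ℕ) (hab : a < b) :
    runListR a b ≠ [] ∧ (List.Chain' (fun x y => y = x + 1) (runListR a b) ∨
      List.Chain' (fun x y => x = y + 1) (runListR a b)) := by
  constructor
  · unfold runListR
    simp only [ne_eq, List.reverse_eq_nil_iff]
    intro hcon
    have := congrArg List.length hcon
    simp at this
    omega
  · right
    unfold runListR
    rw [List.Chain', List.isChain_reverse]
    have := chain'_range' (a + 1) (b - a)
    apply List.IsChain.imp _ this
    intro x y hxy
    simpa [flip] using hxy

lemma isRun_range' (s k : ℕ) (hk : 0 < k) :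
    List.range' s k ≠ [] ∧ (List.Chain' (fun x y => y = x + 1) (List.range' s k) ∨
      List.Chain' (fun x y => x = y + 1) (List.range' s k)) := by
  constructor
  · intro hcon
    have := congrArg List.length hcon
    simp at this
    omega
  · left; exact chain'_range' s k



def oneVal (u : Equiv.Perm (Fin n)) (k : ℕ) : ℕ :=
  if h : k < n then (u ⟨k, h⟩ : ℕ) + 1 else 0

def liSet (u : Equiv.Perm (Fin n)) : Set ℕ :=
  {k | ∃ is : List ℕ, (∀ x ∈ is, x < n) ∧ is.Pairwise (· < ·) ∧
    (is.map (oneVal u)).Pairwise (· < ·) ∧ is.length = k}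

lemma oneLine_eq_map (u : Equiv.Perm (Fin n)) :
    oneLine u = (List.range n).map (oneVal u) := by
  apply List.ext_getElem
  · simp [oneLine]
  · intro i h1 h2
    have hi : i < n := by simpa [oneLine] using h1
    simp only [oneLine, List.getElem_ofFn]
    rw [List.getElem_map, List.getElem_range]
    rw [oneVal, dif_pos hi]

lemma sublist_range' : ∀ (k s : ℕ) (l : List ℕ), l.Pairwise (· < ·) →
    (∀ x ∈ l, s ≤ x ∧ x < s + k) → l.Sublist (List.range' s k) := by
  intro k
  induction k with
  | zero =>
    intro s l _ hb
    cases l with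
    | nil => simp
    | cons a t => exact absurd (hb a (by simp)) (by omega)
  | succ m ih =>
    intro s l hp hb
    rw [List.range'_succ]
    cases l with
    | nil => exact List.nil_sublist _
    | cons a t =>
      rcases eq_or_ne a s with heq | hne
      · subst heq
        apply List.Sublist.cons₂
        apply ih (a + 1) t (hp.sublist (List.sublist_cons_self a t))
        intro x hx
        have h1 := (List.pairwise_cons.mp hp).1 x hx
        have h2 := hb x (by simp [hx])
        omega
      · apply List.Sublist.cons
        apply ih (s + 1) (a :: t) hp
        intro x hx
        have h2 := hb x hx
        rcases List.mem_cons.mp hx with rfl | hx'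
        · constructor <;> omega
        · have h1 := (List.pairwise_cons.mp hp).1 x hx'
          have h3 := hb a (by simp)
          omega

lemma sublist_range {l : List ℕ} (hp : l.Pairwise (· < ·)) (hb : ∀ x ∈ l, x < n) :
    l.Sublist (List.range n) := by
  rw [List.range_eq_range']
  exact sublist_range' n 0 l hp (fun x hx => ⟨Nat.zero_le x, by simpa using hb x hx⟩)

lemma lisLen_eq_sSup (u : Equiv.Perm (Fin n)) : lisLen u = sSup (liSet u) := by
  unfold lisLen
  congr 1
  ext k
  constructor
  · rintro ⟨l, hsub, hsort, hlen⟩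
    rw [oneLine_eq_map] at hsub
    obtain ⟨is, his, rfl⟩ := List.sublist_map_iff.mp hsub
    refine ⟨is, ?_, ?_, ?_, by simpa using hlen⟩
    · intro x hx
      have := his.subset hx
      simpa using this
    · exact List.pairwise_lt_range.sublist his
    · exact hsort
  · rintro ⟨is, hb, hp, hv, hlen⟩
    refine ⟨is.map (oneVal u), ?_, hv, by simpa using hlen⟩
    rw [oneLine_eq_map]
    exact (sublist_range hp hb).map (oneVal u)

lemma liSet_nonempty (u : Equiv.Perm (Fin n)) : (liSet u).Nonempty :=
  ⟨0, [], by simp⟩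

lemma liSet_bdd (u : Equiv.Perm (Fin n)) : BddAbove (liSet u) := by
  refine ⟨n, ?_⟩
  rintro k ⟨is, hb, hp, _, hlen⟩
  have := (sublist_range hp hb).length_le
  simpa [hlen] using this

lemma oneVal_of_lt (u : Equiv.Perm (Fin n)) {x : ℕ} (hx : x < n) :
    oneVal u x = (u ⟨x, hx⟩ : ℕ) + 1 := dif_pos hx

lemma dropWhile_ge (A : ℕ) : ∀ (l : List ℕ), l.Pairwise (· < ·) →
    ∀ y ∈ l.dropWhile (fun x => decide (x < A)), A ≤ y := by
  intro l
  induction l with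
  | nil => simp
  | cons a t ih =>
    intro hp y hy
    by_cases ha : a < A
    · rw [List.dropWhile_cons_of_pos (by simpa using ha)] at hy
      exact ih (List.pairwise_cons.mp hp).2 y hy
    · rw [List.dropWhile_cons_of_neg (by simpa using ha)] at hy
      rcases List.mem_cons.mp hy with rfl | hy'
      · omega
      · have := (List.pairwise_cons.mp hp).1 y hy'
        omega

lemma pairwise_cases {α : Type*} {R : α → α → Prop} {a b : α} :
    ∀ {l : List α}, l.Pairwise R → a ∈ l → b ∈ l → a = b ∨ R a b ∨ R b a := by
  intro l
  induction l with
  | nil => intro _ ha; exact absurd ha List.not_mem_nil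
  | cons c t ih =>
    intro hp ha hb
    obtain ⟨hc, ht⟩ := List.pairwise_cons.mp hp
    rcases List.mem_cons.mp ha with rfl | ha' <;> rcases List.mem_cons.mp hb with h | hb'
    · left; exact h.symm
    · right; left; exact hc b hb'
    · right; right; exact (h ▸ hc) a ha'
    · exact ih ht ha' hb'

end St3


theorem stmt3 (n : ℕ) (w : Equiv.Perm (Fin n)) (hw : w ≠ 1) :
    ∃ r : List ℕ, IsRun r ∧ (∀ i ∈ r, 1 ≤ i ∧ i < n) ∧
      ((coxLength n (w * (r.map (simpleT n)).prod) + r.length = coxLength n w ∧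
          lisLen w < lisLen (w * (r.map (simpleT n)).prod)) ∨
        (coxLength n ((r.map (simpleT n)).prod * w) + r.length = coxLength n w ∧
          lisLen w < lisLen ((r.map (simpleT n)).prod * w))) := by
  classical
  open St3 in
  have hex : ∃ k : ℕ, ∃ hk : k < n, w ⟨k, hk⟩ ≠ ⟨k, hk⟩ := by
    by_contra hc
    push_neg at hc
    apply hw
    ext x
    have := hc (x : ℕ) x.isLt
    simpa [Fin.eta] using congrArg Fin.val this
  set A := Nat.find hex with hAdef
  obtain ⟨hAn, hAne⟩ := Nat.find_spec hex
  have hfix : ∀ (k : ℕ) (hk : k < n), k < A → w ⟨k, hk⟩ = ⟨k, hk⟩ := by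
    intro k hk hlt
    by_contra hc
    exact Nat.find_min hex hlt ⟨hk, hc⟩
  have hge : ∀ x : Fin n, A ≤ (x : ℕ) → A ≤ (w x : ℕ) := by
    intro x hx
    by_contra hc
    push_neg at hc
    have h1 : w ⟨(w x : ℕ), (w x).isLt⟩ = ⟨(w x : ℕ), (w x).isLt⟩ := hfix _ _ hc
    rw [Fin.eta] at h1
    have h2 := w.injective h1
    have := congrArg Fin.val h2
    omega
  have hgeinv : ∀ x : Fin n, A ≤ (x : ℕ) → A ≤ ((w⁻¹ x : Fin n) : ℕ) := by
    intro x hx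
    by_contra hc
    push_neg at hc
    have h1 : w ⟨((w⁻¹ x : Fin n) : ℕ), (w⁻¹ x).isLt⟩ = ⟨_, (w⁻¹ x).isLt⟩ := hfix _ _ hc
    rw [Fin.eta, Equiv.Perm.apply_inv_self] at h1
    have := congrArg Fin.val h1
    omega
  obtain ⟨d, hd0, hb0⟩ : ∃ d : ℕ, 0 < d ∧ ((w⁻¹ ⟨A, hAn⟩ : Fin n) : ℕ) = A + d := by
    have h1 : A ≤ ((w⁻¹ ⟨A, hAn⟩ : Fin n) : ℕ) := hgeinv ⟨A, hAn⟩ (le_refl A)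
    have h2 : ((w⁻¹ ⟨A, hAn⟩ : Fin n) : ℕ) ≠ A := by
      intro hc
      apply hAne
      have h3 : (w⁻¹ ⟨A, hAn⟩ : Fin n) = ⟨A, hAn⟩ := Fin.ext hc
      calc w ⟨A, hAn⟩ = w (w⁻¹ ⟨A, hAn⟩) := by rw [h3]
        _ = ⟨A, hAn⟩ := Equiv.Perm.apply_inv_self w _
    exact ⟨((w⁻¹ ⟨A, hAn⟩ : Fin n) : ℕ) - A, by omega, by omega⟩
  have hdn : A + d < n := by rw [← hb0]; exact (w⁻¹ ⟨A, hAn⟩).isLt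
  have hwb0 : w ⟨A + d, hdn⟩ = ⟨A, hAn⟩ := by
    have h3 : (⟨A + d, hdn⟩ : Fin n) = w⁻¹ ⟨A, hAn⟩ := Fin.ext (by rw [hb0])
    rw [h3, Equiv.Perm.apply_inv_self]
  obtain ⟨e, he0, hBe⟩ : ∃ e : ℕ, 0 < e ∧ ((w ⟨A, hAn⟩ : Fin n) : ℕ) = A + e := by
    have h1 : A ≤ (w ⟨A, hAn⟩ : ℕ) := hge ⟨A, hAn⟩ (le_refl A)
    have h2 : (w ⟨A, hAn⟩ : ℕ) ≠ A := fun hc => hAne (Fin.ext hc)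
    exact ⟨(w ⟨A, hAn⟩ : ℕ) - A, by omega, by omega⟩
  have hen : A + e < n := by rw [← hBe]; exact (w ⟨A, hAn⟩).isLt
  have hwA : w ⟨A, hAn⟩ = ⟨A + e, hen⟩ := Fin.ext hBe
  -- a longest increasing subsequence of w, as an index list
  obtain ⟨is₀, hb₀, hp₀, hv₀, hlen₀⟩ := Nat.sSup_mem (liSet_nonempty w) (liSet_bdd w)
  set I1 := is₀.takeWhile (fun x => decide (x < A)) with hI1def
  set I2 := is₀.dropWhile (fun x => decide (x < A)) with hI2def
  have hsplit : I1 ++ I2 = is₀ := List.takeWhile_append_dropWhile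
  have hI1lt : ∀ x ∈ I1, x < A := fun x hx => by simpa using List.mem_takeWhile_imp hx
  have hI2ge : ∀ x ∈ I2, A ≤ x := dropWhile_ge A is₀ hp₀
  have hI1sub : I1.Sublist is₀ := List.takeWhile_sublist _
  have hI2sub : I2.Sublist is₀ := List.dropWhile_sublist _
  have hI1n : ∀ x ∈ I1, x < n := fun x hx => hb₀ x (hI1sub.subset hx)
  have hI2n : ∀ x ∈ I2, x < n := fun x hx => hb₀ x (hI2sub.subset hx)
  have hlen' : I1.length + I2.length = is₀.length := by
    rw [← hsplit, List.length_append]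
  have hmapsplit : is₀.map (oneVal w) = I1.map (oneVal w) ++ I2.map (oneVal w) := by
    rw [← hsplit, List.map_append]
  have hvsplit := List.pairwise_append.mp (hmapsplit ▸ hv₀)
  have hP1 : (I1.map (oneVal w)).Pairwise (· < ·) := hvsplit.1
  have hP2 : (I2.map (oneVal w)).Pairwise (· < ·) := hvsplit.2.1
  have hval1 : ∀ x ∈ I1, oneVal w x = x + 1 := by
    intro x hx
    have hxn := hI1n x hx
    rw [oneVal_of_lt w hxn, hfix x hxn (hI1lt x hx)]
  have hvalb0 : oneVal w (A + d) = A + 1 := by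
    rw [oneVal_of_lt w hdn, hwb0]
  have hvalA : oneVal w A = A + e + 1 := by
    rw [oneVal_of_lt w hAn, hwA]
  have hval2 : ∀ x ∈ I2, x ≠ A + d → A + 1 < oneVal w x := by
    intro x hx hne
    have hxn := hI2n x hx
    rw [oneVal_of_lt w hxn]
    have h1 : A ≤ (w ⟨x, hxn⟩ : ℕ) := hge _ (hI2ge x hx)
    have h2 : (w ⟨x, hxn⟩ : ℕ) ≠ A := by
      intro hc
      have h3 : w ⟨x, hxn⟩ = ⟨A, hAn⟩ := Fin.ext hc
      have h4 := w.injective (h3.trans hwb0.symm)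
      exact hne (congrArg Fin.val h4)
    omega
  by_cases hmem : (A + d) ∈ is₀
  · -- Case L : left multiplication by the increasing run [A+1, ..., A+e]
    have hAnotmem : A ∉ is₀ := by
      intro hA
      have hcomb : is₀.Pairwise (fun a b => a < b ∧ oneVal w a < oneVal w b) :=
        hp₀.and (List.pairwise_map.mp hv₀)
      rcases pairwise_cases hcomb hA hmem with h | h | h
      · omega
      · have h5 := h.2; rw [hvalA, hvalb0] at h5; omega
      · have h5 := h.1; omega
    have hI2neA : ∀ x ∈ I2, x ≠ A := by
      intro x hx hc
      exact hAnotmem (hc ▸ hI2sub.subset hx)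
    have hrange : List.range' (A + 1) e = (runListR A (A + e)).reverse := by
      unfold runListR
      rw [List.reverse_reverse]
      congr 1
      omega
    have hprodL : ((List.range' (A + 1) e).map (simpleT n)).prod = (cR n A (A + e))⁻¹ := by
      rw [hrange, prod_map_simpleT_reverse]
      rfl
    refine ⟨List.range' (A + 1) e, isRun_range' (A + 1) e he0, ?_, Or.inr ⟨?_, ?_⟩⟩
    · intro i hi
      rw [List.mem_range'_1] at hi
      omega
    · rw [hprodL, coxLength_eq_invNum, coxLength_eq_invNum]
      have hlenr : (List.range' (A + 1) e).length = e := by simp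
      rw [hlenr]
      have h1 : invNum ((cR n A (A + e))⁻¹ * w) = invNum (w⁻¹ * cR n A (A + e)) := by
        rw [← invNum_inv ((cR n A (A + e))⁻¹ * w), mul_inv_rev, inv_inv]
      rw [h1, ← invNum_inv w]
      apply invNum_mul_cR A e hen w⁻¹
      intro x hx h1' h2'
      have hinvB : w⁻¹ ⟨A + e, hen⟩ = ⟨A, hAn⟩ := by
        rw [← hwA, Equiv.Perm.inv_apply_self]
      rw [hinvB, Fin.lt_def]
      have h3 : A ≤ ((w⁻¹ ⟨x, hx⟩ : Fin n) : ℕ) := hgeinv _ h1'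
      have h4 : ((w⁻¹ ⟨x, hx⟩ : Fin n) : ℕ) ≠ A := by
        intro hc
        have h5 : w⁻¹ ⟨x, hx⟩ = ⟨A, hAn⟩ := Fin.ext hc
        have h6 : (⟨x, hx⟩ : Fin n) = w ⟨A, hAn⟩ := by
          rw [← h5, Equiv.Perm.apply_inv_self]
        rw [hwA] at h6
        have h7 := congrArg Fin.val h6
        simp only [Fin.val_mk] at h7
        omega
      simp only [Fin.val_mk]
      omega
    · rw [hprodL, lisLen_eq_sSup, lisLen_eq_sSup]
      set w'' := (cR n A (A + e))⁻¹ * w with hw''def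
      have happ : ∀ (x : ℕ) (hx : x < n), w'' ⟨x, hx⟩ = (cR n A (A + e))⁻¹ (w ⟨x, hx⟩) :=
        fun x hx => rfl
      have hcLfix : ∀ (v : ℕ) (hv : v < n), v < A →
          (cR n A (A + e))⁻¹ ⟨v, hv⟩ = ⟨v, hv⟩ := by
        intro v hv hvA
        have hR : cR n A (A + e) ⟨v, hv⟩ = ⟨v, hv⟩ := by
          rw [cR_apply A e hen v hv, if_neg (by omega), if_neg (by omega)]
        conv_lhs => rw [← hR]
        exact Equiv.Perm.inv_apply_self _ _
      have hcLB : (cR n A (A + e))⁻¹ ⟨A + e, hen⟩ = ⟨A, hAn⟩ := by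
        have hR : cR n A (A + e) ⟨A, hAn⟩ = ⟨A + e, hen⟩ := by
          rw [cR_apply A e hen A hAn, if_pos ⟨rfl, he0⟩]
        rw [← hR, Equiv.Perm.inv_apply_self]
      have hcLmid : ∀ (v : ℕ) (hv : v < n) (hv1 : v + 1 < n), A ≤ v → v < A + e →
          (cR n A (A + e))⁻¹ ⟨v, hv⟩ = ⟨v + 1, hv1⟩ := by
        intro v hv hv1 h1' h2'
        have hR : cR n A (A + e) ⟨v + 1, hv1⟩ = ⟨v, hv⟩ := by
          rw [cR_apply A e hen (v + 1) hv1, if_neg (by omega), if_pos (by omega)]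
          exact Fin.ext (by simp)
        rw [← hR, Equiv.Perm.inv_apply_self]
      have hcLhi : ∀ (v : ℕ) (hv : v < n), A + e < v →
          (cR n A (A + e))⁻¹ ⟨v, hv⟩ = ⟨v, hv⟩ := by
        intro v hv h'
        have hR : cR n A (A + e) ⟨v, hv⟩ = ⟨v, hv⟩ := by
          rw [cR_apply A e hen v hv, if_neg (by omega), if_neg (by omega)]
        conv_lhs => rw [← hR]
        exact Equiv.Perm.inv_apply_self _ _
      have hone1 : ∀ x, x < A → oneVal w'' x = oneVal w x := by
        intro x hxA
        have hxn : x < n := by omega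
        rw [oneVal_of_lt w'' hxn, oneVal_of_lt w hxn, happ x hxn, hfix x hxn hxA,
          hcLfix x hxn hxA]
      have honeA : oneVal w'' A = A + 1 := by
        rw [oneVal_of_lt w'' hAn, happ A hAn, hwA, hcLB]
      have hvneB : ∀ (x : ℕ) (hxn : x < n), x ∈ I2 → (w ⟨x, hxn⟩ : ℕ) ≠ A + e := by
        intro x hxn hx hc
        have h5 : w ⟨x, hxn⟩ = ⟨A + e, hen⟩ := Fin.ext hc
        have h6 := w.injective (h5.trans hwA.symm)
        have hxeq := congrArg Fin.val h6
        simp only [Fin.val_mk] at hxeq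
        exact hAnotmem (hxeq ▸ hI2sub.subset hx)
      have hval'' : ∀ (x : ℕ) (hxn : x < n), A ≤ x → (w ⟨x, hxn⟩ : ℕ) ≠ A + e →
          oneVal w'' x = (if (w ⟨x, hxn⟩ : ℕ) < A + e then (w ⟨x, hxn⟩ : ℕ) + 1
            else (w ⟨x, hxn⟩ : ℕ)) + 1 := by
        intro x hxn h1' hvne
        have hv : A ≤ (w ⟨x, hxn⟩ : ℕ) := hge _ h1'
        rw [oneVal_of_lt w'' hxn, happ x hxn]
        by_cases hlt : (w ⟨x, hxn⟩ : ℕ) < A + e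
        · rw [if_pos hlt]
          have h6 := hcLmid (w ⟨x, hxn⟩ : ℕ) (w ⟨x, hxn⟩).isLt (by omega) hv hlt
          rw [Fin.eta] at h6
          rw [h6]
        · rw [if_neg hlt]
          have h6 := hcLhi (w ⟨x, hxn⟩ : ℕ) (w ⟨x, hxn⟩).isLt (by omega)
          rw [Fin.eta] at h6
          rw [h6]
      have hone2 : ∀ x ∈ I2, A + 1 < oneVal w'' x := by
        intro x hx
        have hxn := hI2n x hx
        have hvne := hvneB x hxn hx
        have hv : A ≤ (w ⟨x, hxn⟩ : ℕ) := hge _ (hI2ge x hx)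
        rw [hval'' x hxn (hI2ge x hx) hvne]
        split_ifs <;> omega
      have hmono2 : I2.Pairwise (fun a b => oneVal w'' a < oneVal w'' b) := by
        have hP2' : I2.Pairwise (fun a b => oneVal w a < oneVal w b) :=
          List.pairwise_map.mp hP2
        refine List.Pairwise.imp_of_mem ?_ hP2'
        intro a b ha hb hab
        have han := hI2n a ha
        have hbn := hI2n b hb
        have h7 := hvneB a han ha
        have h8 := hvneB b hbn hb
        rw [oneVal_of_lt w han, oneVal_of_lt w hbn] at hab
        rw [hval'' a han (hI2ge a ha) h7, hval'' b hbn (hI2ge b hb) h8]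
        split_ifs <;> omega
      set is' := I1 ++ A :: I2 with his'
      have hbound' : ∀ x ∈ is', x < n := by
        intro x hx
        rcases List.mem_append.mp hx with h | h
        · exact hI1n x h
        · rcases List.mem_cons.mp h with rfl | h'
          · exact hAn
          · exact hI2n x h'
      have hpw' : is'.Pairwise (· < ·) := by
        rw [his', List.pairwise_append]
        refine ⟨hp₀.sublist hI1sub, List.pairwise_cons.mpr ⟨?_, hp₀.sublist hI2sub⟩, ?_⟩
        · intro y hy
          have h1' := hI2ge y hy
          have h2' := hI2neA y hy
          omega
        · intro a ha b hb
          have h1' := hI1lt a ha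
          rcases List.mem_cons.mp hb with rfl | hb'
          · omega
          · have := hI2ge b hb'
            omega
      have hvw' : (is'.map (oneVal w'')).Pairwise (· < ·) := by
        have hmapeq : is'.map (oneVal w'') =
            I1.map (oneVal w) ++ (A + 1) :: I2.map (oneVal w'') := by
          rw [his', List.map_append, List.map_cons]
          congr 1
          · exact List.map_congr_left (fun x hx => hone1 x (hI1lt x hx))
          · rw [honeA]
        rw [hmapeq, List.pairwise_append]
        refine ⟨hP1, List.pairwise_cons.mpr ⟨?_, List.pairwise_map.mpr hmono2⟩, ?_⟩
        · intro y hy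
          obtain ⟨z, hz, rfl⟩ := List.mem_map.mp hy
          exact hone2 z hz
        · intro a ha b hb
          obtain ⟨z, hz, rfl⟩ := List.mem_map.mp ha
          have h1' := hval1 z hz
          have h3' := hI1lt z hz
          rcases List.mem_cons.mp hb with rfl | hb'
          · omega
          · obtain ⟨y, hy, rfl⟩ := List.mem_map.mp hb'
            have h2' := hone2 y hy
            omega
      have hmem' : is'.length ∈ liSet w'' := ⟨is', hbound', hpw', hvw', rfl⟩
      have hlow := le_csSup (liSet_bdd w'') hmem'
      have hlis' : is'.length = is₀.length + 1 := by
        rw [his']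
        simp only [List.length_append, List.length_cons]
        omega
      omega
  · -- Case R : right multiplication by the decreasing run [A+d, ..., A+1]
    have hI2ne : ∀ x ∈ I2, x ≠ A + d := by
      intro x hx hc
      exact hmem (hc ▸ hI2sub.subset hx)
    refine ⟨runListR A (A + d), isRun_runListR A (A + d) (by omega), ?_, Or.inl ⟨?_, ?_⟩⟩
    · intro i hi
      unfold runListR at hi
      rw [List.mem_reverse, List.mem_range'_1] at hi
      omega
    · have hprod : ((runListR A (A + d)).map (simpleT n)).prod = cR n A (A + d) := rfl
      have hlenr : (runListR A (A + d)).length = d := by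
        unfold runListR
        simp
      rw [hprod, hlenr, coxLength_eq_invNum, coxLength_eq_invNum]
      apply invNum_mul_cR A d hdn w
      intro x hx h1 h2
      rw [hwb0, Fin.lt_def]
      have h3 : A ≤ (w ⟨x, hx⟩ : ℕ) := hge _ h1
      have h4 : (w ⟨x, hx⟩ : ℕ) ≠ A := by
        intro hc
        have h5 : w ⟨x, hx⟩ = ⟨A, hAn⟩ := Fin.ext hc
        have h6 := w.injective (h5.trans hwb0.symm)
        have h7 := congrArg Fin.val h6
        simp only [Fin.val_mk] at h7
        omega
      simp only [Fin.val_mk]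
      omega
    · have hprod : ((runListR A (A + d)).map (simpleT n)).prod = cR n A (A + d) := rfl
      rw [hprod, lisLen_eq_sSup, lisLen_eq_sSup]
      set w' := w * cR n A (A + d) with hw'def
      have happ : ∀ (x : ℕ) (hx : x < n), w' ⟨x, hx⟩ = w (cR n A (A + d) ⟨x, hx⟩) :=
        fun x hx => rfl
      have hone1 : ∀ x, x < A → oneVal w' x = oneVal w x := by
        intro x hxA
        have hxn : x < n := by omega
        rw [oneVal_of_lt w' hxn, oneVal_of_lt w hxn, happ x hxn,
          cR_apply A d hdn x hxn, if_neg (by omega), if_neg (by omega)]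
      have honeA : oneVal w' A = A + 1 := by
        rw [oneVal_of_lt w' hAn, happ A hAn, cR_apply A d hdn A hAn,
          if_pos ⟨rfl, hd0⟩, hwb0]
      have hshift : ∀ x ∈ I2, oneVal w' (if x < A + d then x + 1 else x) = oneVal w x := by
        intro x hx
        have hxn := hI2n x hx
        have hxA := hI2ge x hx
        have hxne := hI2ne x hx
        by_cases hlt : x < A + d
        · rw [if_pos hlt]
          have hx1n : x + 1 < n := by omega
          rw [oneVal_of_lt w' hx1n, oneVal_of_lt w hxn, happ (x + 1) hx1n,
            cR_apply A d hdn (x + 1) hx1n, if_neg (by omega), if_pos (by omega)]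
          congr 2
        · rw [if_neg hlt]
          rw [oneVal_of_lt w' hxn, oneVal_of_lt w hxn, happ x hxn,
            cR_apply A d hdn x hxn, if_neg (by omega), if_neg (by omega)]
      set is' := I1 ++ A :: I2.map (fun x => if x < A + d then x + 1 else x) with his'
      have hbound' : ∀ x ∈ is', x < n := by
        intro x hx
        rcases List.mem_append.mp hx with h | h
        · exact hI1n x h
        · rcases List.mem_cons.mp h with rfl | h'
          · exact hAn
          · obtain ⟨z, hz, rfl⟩ := List.mem_map.mp h'
            have := hI2n z hz
            split_ifs <;> omega
      have hpw' : is'.Pairwise (· < ·) := by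
        rw [his', List.pairwise_append]
        refine ⟨hp₀.sublist hI1sub, List.pairwise_cons.mpr ⟨?_, ?_⟩, ?_⟩
        · intro y hy
          obtain ⟨z, hz, rfl⟩ := List.mem_map.mp hy
          have h1' := hI2ge z hz
          have h2' := hI2ne z hz
          split_ifs <;> omega
        · rw [List.pairwise_map]
          refine List.Pairwise.imp_of_mem ?_ (hp₀.sublist hI2sub)
          intro a b ha hb hab
          have h1' := hI2ne a ha
          have h2' := hI2ne b hb
          split_ifs <;> omega
        · intro a ha b hb
          have h1' := hI1lt a ha
          rcases List.mem_cons.mp hb with rfl | hb'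
          · omega
          · obtain ⟨z, hz, rfl⟩ := List.mem_map.mp hb'
            have := hI2ge z hz
            split_ifs <;> omega
      have hvw' : (is'.map (oneVal w')).Pairwise (· < ·) := by
        have hmapeq : is'.map (oneVal w') =
            I1.map (oneVal w) ++ (A + 1) :: I2.map (oneVal w) := by
          rw [his', List.map_append, List.map_cons, List.map_map]
          congr 1
          · exact List.map_congr_left (fun x hx => hone1 x (hI1lt x hx))
          · rw [honeA]
            congr 1
            exact List.map_congr_left (fun x hx => hshift x hx)
        rw [hmapeq, List.pairwise_append]
        refine ⟨hP1, List.pairwise_cons.mpr ⟨?_, hP2⟩, ?_⟩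
        · intro y hy
          obtain ⟨z, hz, rfl⟩ := List.mem_map.mp hy
          exact hval2 z hz (hI2ne z hz)
        · intro a ha b hb
          obtain ⟨z, hz, rfl⟩ := List.mem_map.mp ha
          have h1' := hval1 z hz
          have h3' := hI1lt z hz
          rcases List.mem_cons.mp hb with rfl | hb'
          · omega
          · obtain ⟨y, hy, rfl⟩ := List.mem_map.mp hb'
            have h2' := hval2 y hy (hI2ne y hy)
            omega
      have hmem' : is'.length ∈ liSet w' := ⟨is', hbound', hpw', hvw', rfl⟩
      have hlow := le_csSup (liSet_bdd w') hmem'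
      have hlis' : is'.length = is₀.length + 1 := by
        rw [his']
        simp only [List.length_append, List.length_cons, List.length_map]
        omega
      omega
end

section
/- The minimum number of runs whose concatenation is a (not necessarily reduced) decomposition for a permutation w in S_n equals run(w), the minimum number of runs whose concatenation is a reduced word for w. -/
theorem Equiv.Perm.inv_apply_self_s4 {α : Type*} (f : Equiv.Perm α) (x : α) : f⁻¹ (f x) = x :=
  Equiv.symm_apply_apply f x

theorem Equiv.Perm.apply_inv_self_s4 {α : Type*} (f : Equiv.Perm α) (x : α) : f (f⁻¹ x) = x :=
  Equiv.apply_symm_apply f x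

namespace Stmt4Aux
variable {n : ℕ}

lemma simpleT_valid {i : ℕ} (h1 : 1 ≤ i) (h2 : i < n) :
    simpleT n i = Equiv.swap ⟨i - 1, by omega⟩ ⟨i, h2⟩ := by
  simp [simpleT, h1, h2]

lemma simpleT_fix {i : ℕ} {x : Fin n} (hx1 : x.val + 1 ≠ i) (hx2 : x.val ≠ i) :
    simpleT n i x = x := by
  by_cases h : 1 ≤ i ∧ i < n
  · rw [simpleT_valid h.1 h.2]
    apply Equiv.swap_apply_of_ne_of_ne <;> (intro hc; apply_fun Fin.val at hc; simp at hc; omega)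
  · simp [simpleT, h]

lemma simpleT_left {i : ℕ} (h1 : 1 ≤ i) (h2 : i < n) :
    simpleT n i ⟨i - 1, by omega⟩ = ⟨i, h2⟩ := by
  rw [simpleT_valid h1 h2]; exact Equiv.swap_apply_left _ _

lemma simpleT_right {i : ℕ} (h1 : 1 ≤ i) (h2 : i < n) :
    simpleT n i ⟨i, h2⟩ = ⟨i - 1, by omega⟩ := by
  rw [simpleT_valid h1 h2]; exact Equiv.swap_apply_right _ _

lemma simpleT_inv (i : ℕ) : (simpleT n i)⁻¹ = simpleT n i := by
  by_cases h : 1 ≤ i ∧ i < n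
  · rw [simpleT_valid h.1 h.2]; exact Equiv.swap_inv _ _
  · simp [simpleT, h]

/-- product of simple transpositions with indices `a, a+1, …, a+k-1`. -/
def C (n a k : ℕ) : Equiv.Perm (Fin n) := ((List.range' a k).map (simpleT n)).prod

lemma C_zero (a : ℕ) : C n a 0 = 1 := rfl

lemma C_succ (a k : ℕ) : C n a (k + 1) = simpleT n a * C n (a + 1) k := by
  have : List.range' a (k+1) = a :: List.range' (a+1) k := List.range'_succ
  rw [C, this]; simp [C]

lemma C_apply_lt {a k : ℕ} (x : Fin n) (hx : x.val + 1 < a) : C n a k x = x := by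
  induction k generalizing a with
  | zero => rfl
  | succ k ih =>
    rw [C_succ, Equiv.Perm.mul_apply, ih (a := a + 1) (by omega)]
    exact simpleT_fix (by omega) (by omega)

lemma C_apply_ge {a k : ℕ} (x : Fin n) (hx : a + k ≤ x.val) : C n a k x = x := by
  induction k generalizing a with
  | zero => rfl
  | succ k ih =>
    rw [C_succ, Equiv.Perm.mul_apply, ih (a := a + 1) (by omega)]
    exact simpleT_fix (by omega) (by omega)

lemma C_apply_mid {a k : ℕ} (h1 : 1 ≤ a) (hk : a + k ≤ n) (x : Fin n)
    (hxa : a ≤ x.val + 1) (hxk : x.val + 2 ≤ a + k) : C n a k x = ⟨x.val + 1, by omega⟩ := by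
  induction k generalizing a with
  | zero => omega
  | succ k ih =>
    rw [C_succ, Equiv.Perm.mul_apply]
    rcases Nat.eq_or_lt_of_le hxa with h | h
    · rw [C_apply_lt x (by omega)]
      apply Fin.ext
      have hxx : x = (⟨a - 1, by omega⟩ : Fin n) := Fin.ext (by simp <;> omega)
      conv_lhs => rw [hxx]
      rw [simpleT_left h1 (by omega)]
      simp; omega
    · rw [ih (by omega) (by omega) (by omega) (by omega)]
      exact simpleT_fix (by simp <;> omega) (by simp <;> omega)

lemma C_apply_top {a k : ℕ} (h1 : 1 ≤ a) (hk : a + k ≤ n) (hkk : 1 ≤ k) (x : Fin n)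
    (hx : x.val + 1 = a + k) : C n a k x = ⟨a - 1, by omega⟩ := by
  induction k generalizing a with
  | zero => omega
  | succ k ih =>
    rw [C_succ, Equiv.Perm.mul_apply]
    rcases Nat.eq_zero_or_pos k with hk0 | hk0
    · subst hk0
      rw [C_zero, Equiv.Perm.one_apply]
      apply Fin.ext
      have hxx : x = (⟨a, by omega⟩ : Fin n) := Fin.ext (by simp <;> omega)
      conv_lhs => rw [hxx]
      rw [simpleT_right h1 (by omega)]
    · rw [ih (by omega) (by omega) hk0 (by omega)]
      apply Fin.ext
      have h5 : (⟨a + 1 - 1, by omega⟩ : Fin n) = (⟨a, by omega⟩ : Fin n) := Fin.ext (by simp)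
      rw [h5, simpleT_right h1 (by omega)]

lemma C_mono {a k : ℕ} (h1 : 1 ≤ a) (hk : a + k ≤ n) {x y : Fin n} (hxy : x < y)
    (hx : x.val + 1 ≠ a + k) (hy : y.val + 1 ≠ a + k) : C n a k x < C n a k y := by
  have hxy' : x.val < y.val := hxy
  have hx3 : x.val + 1 < a ∨ (a ≤ x.val + 1 ∧ x.val + 2 ≤ a + k) ∨ a + k ≤ x.val := by omega
  have hy3 : y.val + 1 < a ∨ (a ≤ y.val + 1 ∧ y.val + 2 ≤ a + k) ∨ a + k ≤ y.val := by omega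
  rcases hx3 with hxl | hxm | hxg
  · rcases hy3 with hyl | hym | hyg
    · rw [C_apply_lt x (by omega), C_apply_lt y (by omega)]; exact hxy
    · rw [C_apply_lt x (by omega), C_apply_mid h1 hk y hym.1 hym.2]
      simp only [Fin.lt_def]; omega
    · rw [C_apply_lt x (by omega), C_apply_ge y (by omega)]; exact hxy
  · rcases hy3 with hyl | hym | hyg
    · omega
    · rw [C_apply_mid h1 hk x hxm.1 hxm.2, C_apply_mid h1 hk y hym.1 hym.2]
      simp only [Fin.lt_def]; omega
    · rw [C_apply_mid h1 hk x hxm.1 hxm.2, C_apply_ge y (by omega)]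
      simp only [Fin.lt_def]; omega
  · rcases hy3 with hyl | hym | hyg
    · omega
    · omega
    · rw [C_apply_ge x (by omega), C_apply_ge y (by omega)]; exact hxy

lemma C_inv_apply {a k : ℕ} (h1 : 1 ≤ a) (hk : a + k ≤ n) (z : Fin n) (hz : z.val + 1 ≠ a) :
    (C n a k)⁻¹ z = if h : a ≤ z.val ∧ z.val < a + k then ⟨z.val - 1, by omega⟩ else z := by
  rw [Equiv.Perm.inv_def, Equiv.symm_apply_eq]
  split_ifs with h
  · rw [C_apply_mid h1 hk _ (by simp <;> omega) (by simp <;> omega)]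
    exact Fin.ext (by simp <;> omega)
  · rcases (by omega : z.val + 1 < a ∨ a + k ≤ z.val) with h' | h'
    · rw [C_apply_lt z h']
    · rw [C_apply_ge z h']

lemma Cinv_mono {a k : ℕ} (h1 : 1 ≤ a) (hk : a + k ≤ n) {x y : Fin n} (hxy : x < y)
    (hx : x.val + 1 ≠ a) (hy : y.val + 1 ≠ a) : (C n a k)⁻¹ x < (C n a k)⁻¹ y := by
  have hxy' : x.val < y.val := hxy
  rw [C_inv_apply h1 hk x hx, C_inv_apply h1 hk y hy]
  split_ifs with h g g <;> simp only [Fin.lt_def] <;> omega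

lemma prod_reverse_eq_inv (l : List ℕ) :
    ((l.map (simpleT n)).prod)⁻¹ = ((l.reverse.map (simpleT n)).prod) := by
  induction l with
  | nil => simp
  | cons x t ih =>
    rw [List.map_cons, List.prod_cons, mul_inv_rev, ih, simpleT_inv, List.reverse_cons,
      List.map_append, List.prod_append]
    simp

lemma chain'_range' : ∀ (k a : ℕ), List.Chain' (fun p q => q = p + 1) (List.range' a k)
  | 0, a => by exact List.isChain_nil
  | (k+1), a => by
    rw [List.range'_succ]
    cases k with
    | zero => exact List.isChain_singleton _
    | succ k =>
      rw [List.range'_succ]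
      exact List.IsChain.cons_cons rfl (by rw [← List.range'_succ]; exact chain'_range' (k+1) (a+1))

lemma eq_range'_of_chain' : ∀ l : List ℕ, List.Chain' (fun p q => q = p + 1) l →
    l = List.range' (l.headD 0) l.length
  | [], _ => rfl
  | [x], _ => by simp [List.range'_succ]
  | x :: y :: t, h => by
    rw [List.Chain', List.isChain_cons_cons] at h
    have ih := eq_range'_of_chain' (y :: t) h.2
    have hlen : (x :: y :: t).length = (y :: t).length + 1 := rfl
    simp only [List.headD_cons] at ih ⊢
    rw [hlen, List.range'_succ, ← h.1]
    exact congrArg (x :: ·) ih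

lemma run_mono (r : List ℕ) (hr : IsRun r) (hv : ∀ i ∈ r, 1 ≤ i ∧ i < n) :
    ∃ v₀ : Fin n, ∀ x y : Fin n, x < y → x ≠ v₀ → y ≠ v₀ →
      ((r.map (simpleT n)).prod) x < ((r.map (simpleT n)).prod) y := by
  obtain ⟨hne, hch | hch⟩ := hr
  · obtain ⟨a, k, hk1, heq⟩ : ∃ a k, 1 ≤ k ∧ r = List.range' a k :=
      ⟨r.headD 0, r.length, List.length_pos_iff.mpr hne, eq_range'_of_chain' r hch⟩
    have hmema : a ∈ r := by rw [heq]; exact List.mem_range'_1.mpr ⟨le_rfl, by omega⟩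
    have ha1 : 1 ≤ a := (hv _ hmema).1
    have hmlast : a + k - 1 ∈ r := by
      rw [heq]; exact List.mem_range'_1.mpr ⟨by omega, by omega⟩
    have hak : a + k ≤ n := by have := (hv _ hmlast).2; omega
    refine ⟨⟨a + k - 1, by omega⟩, fun x y hxy hx hy => ?_⟩
    have hP : (r.map (simpleT n)).prod = C n a k := by rw [heq]; rfl
    rw [hP]
    refine C_mono ha1 hak hxy (fun hc => hx (Fin.ext (by simp <;> omega)))
      (fun hc => hy (Fin.ext (by simp <;> omega)))
  · have hch' : List.Chain' (fun p q => q = p + 1) r.reverse := by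
      apply List.isChain_reverse.mpr; exact hch
    obtain ⟨a, k, hk1, heq⟩ : ∃ a k, 1 ≤ k ∧ r.reverse = List.range' a k :=
      ⟨r.reverse.headD 0, r.reverse.length,
        by rw [List.length_reverse]; exact List.length_pos_iff.mpr hne,
        eq_range'_of_chain' r.reverse hch'⟩
    have hmema : a ∈ r := by
      rw [← List.mem_reverse, heq]; exact List.mem_range'_1.mpr ⟨le_rfl, by omega⟩
    have ha1 : 1 ≤ a := (hv _ hmema).1
    have hmlast : a + k - 1 ∈ r := by
      rw [← List.mem_reverse, heq]; exact List.mem_range'_1.mpr ⟨by omega, by omega⟩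
    have hak : a + k ≤ n := by have := (hv _ hmlast).2; omega
    have han : a - 1 < n := by omega
    have h2 : ((r.reverse.map (simpleT n)).prod) = C n a k := by rw [heq]; rfl
    have h3 : (r.map (simpleT n)).prod = (C n a k)⁻¹ := by
      have h4 := prod_reverse_eq_inv (n := n) r.reverse
      rw [List.reverse_reverse] at h4
      rw [← h4, h2]
    refine ⟨⟨a - 1, han⟩, fun x y hxy hx hy => ?_⟩
    rw [h3]
    refine Cinv_mono ha1 hak hxy (fun hc => hx (Fin.ext (by simp <;> omega)))
      (fun hc => hy (Fin.ext (by simp <;> omega)))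


def invSet (n : ℕ) (w : Equiv.Perm (Fin n)) : Finset (Fin n × Fin n) :=
  Finset.univ.filter (fun p => p.1 < p.2 ∧ w p.2 < w p.1)

def invF (n : ℕ) (w : Equiv.Perm (Fin n)) : ℕ := (invSet n w).card

lemma mem_invSet {w : Equiv.Perm (Fin n)} {p : Fin n × Fin n} :
    p ∈ invSet n w ↔ p.1 < p.2 ∧ w p.2 < w p.1 := by simp [invSet]

lemma invF_one : invF n 1 = 0 := by
  rw [invF, invSet, Finset.card_eq_zero, Finset.filter_eq_empty_iff]
  rintro ⟨p, q⟩ -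
  simp only [Equiv.Perm.one_apply]
  exact fun h => absurd h.2 (not_lt.mpr h.1.le)

lemma swap_adj_mono {a b : Fin n} (hab : b.val = a.val + 1) {x y : Fin n} (hxy : x < y)
    (hne : ¬(x = a ∧ y = b)) : Equiv.swap a b x < Equiv.swap a b y := by
  have hxy' : x.val < y.val := hxy
  have hne' : ¬(x.val = a.val ∧ y.val = b.val) := fun h => hne ⟨Fin.ext h.1, Fin.ext h.2⟩
  rw [Equiv.swap_apply_def, Equiv.swap_apply_def]
  split_ifs <;> subst_vars <;> simp only [Fin.lt_def, Fin.ext_iff, not_and] at * <;>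
    first | omega | exact absurd trivial (hne' trivial)

lemma invF_mul_le (i : ℕ) (w : Equiv.Perm (Fin n)) :
    invF n (simpleT n i * w) ≤ invF n w + 1 := by
  by_cases hval : 1 ≤ i ∧ i < n
  · have hs : simpleT n i = Equiv.swap ⟨i - 1, by omega⟩ ⟨i, hval.2⟩ := simpleT_valid hval.1 hval.2
    set a : Fin n := ⟨i - 1, by omega⟩ with ha
    set b : Fin n := ⟨i, hval.2⟩ with hb
    have hab : b.val = a.val + 1 := by simp [ha, hb]; omega
    set p₁ := w⁻¹ a with hp₁
    set p₂ := w⁻¹ b with hp₂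
    set q₀ := if p₁ < p₂ then (p₁, p₂) else (p₂, p₁) with hq₀
    have hsub : invSet n (simpleT n i * w) ⊆ insert q₀ (invSet n w) := by
      rintro ⟨p, q⟩ hm
      rw [mem_invSet] at hm
      obtain ⟨hpq, hvv⟩ := hm
      simp only [Equiv.Perm.mul_apply] at hvv
      by_cases hc : w p = a ∧ w q = b
      · have h1 : p = p₁ := by rw [hp₁, ← hc.1, Equiv.Perm.inv_apply_self_s4]
        have h2 : q = p₂ := by rw [hp₂, ← hc.2, Equiv.Perm.inv_apply_self_s4]
        have : q₀ = (p, q) := by rw [hq₀, ← h1, ← h2, if_pos hpq]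
        exact Finset.mem_insert.mpr (Or.inl this.symm)
      · by_cases hc2 : w p = b ∧ w q = a
        · have h1 : p = p₂ := by rw [hp₂, ← hc2.1, Equiv.Perm.inv_apply_self_s4]
          have h2 : q = p₁ := by rw [hp₁, ← hc2.2, Equiv.Perm.inv_apply_self_s4]
          have : q₀ = (p, q) := by
            rw [hq₀, ← h1, ← h2, if_neg (fun h => absurd hpq (not_lt.mpr h.le))]
          exact Finset.mem_insert.mpr (Or.inl this.symm)
        · refine Finset.mem_insert.mpr (Or.inr (mem_invSet.mpr ⟨hpq, ?_⟩))
          rcases lt_trichotomy (w p) (w q) with h | h | h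
          · exfalso
            have := swap_adj_mono hab h hc
            rw [← hs] at this
            exact absurd hvv (not_lt.mpr this.le)
          · exact absurd (w.injective h) (ne_of_lt hpq)
          · exact h
    calc invF n (simpleT n i * w) ≤ (insert q₀ (invSet n w)).card := Finset.card_le_card hsub
      _ ≤ invF n w + 1 := Finset.card_insert_le _ _
  · rw [show simpleT n i = 1 by simp [simpleT, hval], one_mul]
    omega

lemma invF_le_length (l : List ℕ) : invF n ((l.map (simpleT n)).prod) ≤ l.length := by
  induction l with
  | nil => simp [invF_one]
  | cons x t ih =>
    rw [List.map_cons, List.prod_cons, List.length_cons]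
    exact le_trans (invF_mul_le x _) (by omega)


lemma pairwise_nodup {α : Type*} [Preorder α] {l : List α} (h : l.Pairwise (· < ·)) : l.Nodup :=
  h.imp ne_of_lt

lemma pairwise_apply_of_mem {α β : Type*} [Preorder α] [Preorder β] {f : α → β} {l : List α}
    (h1 : l.Pairwise (· < ·)) (h2 : (l.map f).Pairwise (· < ·)) {a b : α}
    (ha : a ∈ l) (hb : b ∈ l) (hab : a < b) : f a < f b := by
  induction l with
  | nil => cases ha
  | cons x t ih =>
    rw [List.pairwise_cons] at h1
    rw [List.map_cons, List.pairwise_cons] at h2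
    rcases List.mem_cons.mp ha with hax | ha'
    · subst hax
      rcases List.mem_cons.mp hb with hbx | hb'
      · subst hbx; exact absurd hab (lt_irrefl _)
      · exact h2.1 _ (List.mem_map_of_mem hb')
    · rcases List.mem_cons.mp hb with hbx | hb'
      · subst hbx; exact absurd hab (lt_asymm (h1.1 a ha'))
      · exact ih h1.2 h2.2 ha' hb'

/-- Lower bound: a word which is a concatenation of `k` runs admits an increasing
position list of length at least `n - k`. -/
lemma partI : ∀ rs : List (List ℕ), (∀ r ∈ rs, IsRun r) → (∀ i ∈ rs.flatten, 1 ≤ i ∧ i < n) →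
    ∃ is : List (Fin n), is.Pairwise (· < ·) ∧
      (is.map ((rs.flatten.map (simpleT n)).prod)).Pairwise (· < ·) ∧
      n ≤ is.length + rs.length := by
  intro rs
  induction rs with
  | nil =>
    intro _ _
    refine ⟨List.finRange n, List.pairwise_lt_finRange n, ?_, by simp⟩
    simp only [List.flatten_nil, List.map_nil, List.prod_nil, Equiv.Perm.coe_one, List.map_id]
    exact List.pairwise_lt_finRange n
  | cons r rs ih =>
    intro hruns hlet
    have hPsplit : ((r :: rs).flatten.map (simpleT n)).prod =
        (r.map (simpleT n)).prod * (rs.flatten.map (simpleT n)).prod := by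
      rw [List.flatten_cons, List.map_append, List.prod_append]
    obtain ⟨is', hp1, hp2, hlen⟩ := ih (fun q hq => hruns q (List.mem_cons_of_mem _ hq))
      (fun i hi => hlet i (by rw [List.flatten_cons]; exact List.mem_append_right _ hi))
    obtain ⟨v₀, hmono⟩ := run_mono r (hruns r (List.mem_cons_self))
      (fun i hi => hlet i (by rw [List.flatten_cons]; exact List.mem_append_left _ hi))
    set u := (rs.flatten.map (simpleT n)).prod with hu
    set c := (r.map (simpleT n)).prod with hc
    by_cases hex : ∃ i ∈ is', u i = v₀
    · obtain ⟨i₀, hi₀, hui₀⟩ := hex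
      refine ⟨is'.erase i₀, List.Pairwise.sublist (List.erase_sublist) hp1, ?_, ?_⟩
      · rw [hPsplit, List.pairwise_map]
        have hsub : (is'.erase i₀).Pairwise (fun a b => u a < u b) := by
          exact List.Pairwise.sublist (List.erase_sublist) (List.pairwise_map.mp hp2)
        refine hsub.imp_of_mem (fun {a} {b} hma hmb hab => ?_)
        have hnd := pairwise_nodup hp1
        have ha' : a ≠ i₀ := ((hnd.mem_erase_iff).mp hma).1
        have hb' : b ≠ i₀ := ((hnd.mem_erase_iff).mp hmb).1
        simp only [Equiv.Perm.mul_apply]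
        refine hmono _ _ hab ?_ ?_
        · rw [← hui₀]; exact fun hcon => ha' (u.injective hcon)
        · rw [← hui₀]; exact fun hcon => hb' (u.injective hcon)
      · rw [List.length_erase_of_mem hi₀, List.length_cons]
        have : 1 ≤ is'.length := List.length_pos_iff.mpr (fun hcon => by simp [hcon] at hi₀)
        omega
    · push_neg at hex
      refine ⟨is', hp1, ?_, by simp only [List.length_cons]; omega⟩
      rw [hPsplit, List.pairwise_map]
      have hsub : is'.Pairwise (fun a b => u a < u b) := List.pairwise_map.mp hp2
      refine hsub.imp_of_mem (fun {a} {b} hma hmb hab => ?_)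
      simp only [Equiv.Perm.mul_apply]
      exact hmono _ _ hab (hex a hma) (hex b hmb)


lemma invA {m : ℕ} (hmn : m < n) (w : Equiv.Perm (Fin n))
    (hfix : ∀ i : Fin n, m + 1 ≤ i.val → w i = i) (j : Fin n) (hj : w j = ⟨m, hmn⟩)
    (hjm : j.val < m) :
    invF n (w * C n (j.val + 1) (m - j.val)) + (m - j.val) ≤ invF n w := by
  classical
  set a := j.val + 1 with ha
  set k := m - j.val with hk
  have h1a : 1 ≤ a := by omega
  have hak : a + k ≤ n := by omega
  set c := C n a k with hcdef
  set w' := w * c with hw'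
  have hvle : ∀ p : Fin n, p.val ≤ m → (w p).val ≤ m := by
    intro p hp
    by_contra hgt
    push_neg at hgt
    have h2 : w (w p) = w p := hfix _ (by omega)
    have h3 : p = w p := w.injective h2.symm
    omega
  have hwm : ∀ p : Fin n, w p = ⟨m, hmn⟩ → p = j := fun p hp =>
    w.injective (by rw [hp, hj])
  have hcm : c ⟨m, hmn⟩ = j := by
    have h4 := C_apply_top (n := n) (a := a) (k := k) h1a hak (by omega) ⟨m, hmn⟩ (by simp <;> omega)
    rw [hcdef, h4]
    exact Fin.ext (by simp <;> omega)
  have hcle : ∀ p : Fin n, p.val < m → (c p).val ≤ m := by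
    intro p hp
    rcases (by omega : p.val + 1 < a ∨ (a ≤ p.val + 1 ∧ p.val + 2 ≤ a + k)) with h5 | h5
    · rw [hcdef, C_apply_lt p h5]; omega
    · rw [hcdef, C_apply_mid h1a hak p h5.1 h5.2]; simp; omega
  have hw'fix : ∀ i : Fin n, m ≤ i.val → w' i = i := by
    intro i hi
    rcases eq_or_lt_of_le hi with he | hlt
    · have hi' : i = ⟨m, hmn⟩ := Fin.ext (by simp <;> omega)
      rw [hw', Equiv.Perm.mul_apply, hi', hcm, hj]
    · rw [hw', Equiv.Perm.mul_apply, hcdef, C_apply_ge i (by omega), hfix i (by omega)]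
  set e : Fin n × Fin n → Fin n × Fin n := fun p => (c p.1, c p.2) with he
  have hedge : ∀ p : Fin n × Fin n, p ∈ invSet n w' → p.1 ≠ ⟨m, hmn⟩ ∧ p.2 ≠ ⟨m, hmn⟩ := by
    rintro ⟨p, q⟩ hm2
    rw [mem_invSet] at hm2
    obtain ⟨hpq, hvv⟩ := hm2
    have hpq' : p.val < q.val := hpq
    constructor
    · rintro rfl
      have hq4 : m < q.val := by simpa using hpq'
      have h4 : w' q = q := hw'fix q (by omega)
      have h5 : w' ⟨m, hmn⟩ = ⟨m, hmn⟩ := hw'fix _ (by simp)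
      rw [h4, h5] at hvv
      have h12 : q.val < m := by simpa [Fin.lt_def] using hvv
      omega
    · rintro rfl
      have hpm : p.val < m := by simpa using hpq'
      have h5 : w' ⟨m, hmn⟩ = ⟨m, hmn⟩ := hw'fix _ (by simp)
      have h6 : (w' p).val ≤ m := by
        rw [hw', Equiv.Perm.mul_apply]
        exact hvle _ (hcle p hpm)
      have h7 : w' p ≠ ⟨m, hmn⟩ := by
        rw [hw', Equiv.Perm.mul_apply]
        intro hcon
        have h8 : c p = j := hwm _ hcon
        have h9 : p = ⟨m, hmn⟩ := c.injective (by rw [h8, hcm])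
        rw [h9] at hpm; simp at hpm
      rw [h5] at hvv
      have h10 : (w' p).val ≠ m := fun hv => h7 (Fin.ext hv)
      have h11 : m < (w' p).val := by simpa [Fin.lt_def] using hvv
      omega
  have himg : ∀ p ∈ (invSet n w').image e, p ∈ invSet n w ∧ p.1 ≠ j := by
    intro p hp
    rw [Finset.mem_image] at hp
    obtain ⟨q2, hq2, rfl⟩ := hp
    obtain ⟨hq1ne, hq2ne⟩ := hedge q2 hq2
    rw [mem_invSet] at hq2
    obtain ⟨hlt, hvv⟩ := hq2
    have hc1 : c q2.1 < c q2.2 := by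
      rw [hcdef]
      exact C_mono h1a hak hlt (fun hcon => hq1ne (Fin.ext (by simp <;> omega)))
        (fun hcon => hq2ne (Fin.ext (by simp <;> omega)))
    refine ⟨mem_invSet.mpr ⟨hc1, ?_⟩, ?_⟩
    · simpa [hw', Equiv.Perm.mul_apply] using hvv
    · intro hcon
      have h11 : q2.1 = ⟨m, hmn⟩ := c.injective (by rw [show c q2.1 = j from hcon, hcm])
      exact hq1ne h11
  set special : Finset (Fin n × Fin n) := (Finset.Ioc j ⟨m, hmn⟩).image (fun q => (j, q)) with hsp
  have hspecialmem : ∀ p ∈ special, p ∈ invSet n w ∧ p.1 = j := by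
    intro p hp
    rw [hsp, Finset.mem_image] at hp
    obtain ⟨q, hq, rfl⟩ := hp
    rw [Finset.mem_Ioc] at hq
    refine ⟨mem_invSet.mpr ⟨hq.1, ?_⟩, rfl⟩
    rw [hj]
    have h7 : (w q).val ≤ m := hvle q (by have := hq.2; simpa [Fin.le_def] using this)
    have h8 : w q ≠ ⟨m, hmn⟩ := by
      intro hcon
      have h9 := hwm q hcon
      rw [h9] at hq
      exact lt_irrefl _ hq.1
    have h10 : (w q).val ≠ m := fun hv => h8 (Fin.ext hv)
    simp only [Fin.lt_def]
    simp <;> omega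
  have hdisj : Disjoint ((invSet n w').image e) special := by
    rw [Finset.disjoint_left]
    intro p hp hps
    exact (himg p hp).2 (hspecialmem p hps).2
  have hsub2 : ((invSet n w').image e) ∪ special ⊆ invSet n w := by
    intro p hp
    rcases Finset.mem_union.mp hp with h | h
    · exact (himg p h).1
    · exact (hspecialmem p h).1
  have hinj : Function.Injective e := by
    rintro ⟨p1, p2⟩ ⟨q1, q2⟩ hpq
    rw [he] at hpq
    simp only [Prod.mk.injEq] at hpq ⊢
    exact ⟨c.injective hpq.1, c.injective hpq.2⟩
  have hcard1 : ((invSet n w').image e).card = invF n w' := Finset.card_image_of_injective _ hinj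
  have hcard2 : special.card = m - j.val := by
    rw [hsp, Finset.card_image_of_injective _
      (fun x y hxy => by simpa using hxy), Fin.card_Ioc]
  calc invF n w' + (m - j.val) = (((invSet n w').image e) ∪ special).card := by
        rw [Finset.card_union_of_disjoint hdisj, hcard1, hcard2]
    _ ≤ invF n w := Finset.card_le_card hsub2


lemma invB {m : ℕ} (hmn : m < n) (w : Equiv.Perm (Fin n))
    (hfix : ∀ i : Fin n, m + 1 ≤ i.val → w i = i) (v : Fin n) (hv : w ⟨m, hmn⟩ = v)
    (hvm : v.val < m) :
    invF n ((C n (v.val + 1) (m - v.val))⁻¹ * w) + (m - v.val) ≤ invF n w := by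
  classical
  set a := v.val + 1 with ha
  set k := m - v.val with hk
  have h1a : 1 ≤ a := by omega
  have hak : a + k ≤ n := by omega
  set c := C n a k with hcdef
  set u := (C n a k)⁻¹ * w with hu
  have hvle : ∀ p : Fin n, p.val ≤ m → (w p).val ≤ m := by
    intro p hp
    by_contra hgt
    push_neg at hgt
    have h2 : w (w p) = w p := hfix _ (by omega)
    have h3 : p = w p := w.injective h2.symm
    omega
  have hwm : ∀ p : Fin n, w p = v → p = ⟨m, hmn⟩ := fun p hp =>
    w.injective (by rw [hp, hv])
  have hcm : c ⟨m, hmn⟩ = v := by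
    have h4 := C_apply_top (n := n) (a := a) (k := k) h1a hak (by omega) ⟨m, hmn⟩ (by simp <;> omega)
    rw [hcdef, h4]
    exact Fin.ext (by simp <;> omega)
  have hcinvv : c⁻¹ v = ⟨m, hmn⟩ := by
    rw [← hcm]; exact Equiv.Perm.inv_apply_self_s4 c _
  have hcinvle : ∀ z : Fin n, z.val ≤ m → (c⁻¹ z).val ≤ m := by
    intro z hz
    by_cases hzv : z = v
    · rw [hzv, hcinvv]
    · have hz1 : z.val + 1 ≠ a := fun hcon => hzv (Fin.ext (by omega))
      rw [hcdef, C_inv_apply h1a hak z hz1]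
      split_ifs with h5
      · simp <;> omega
      · omega
  have hufix : ∀ i : Fin n, m ≤ i.val → u i = i := by
    intro i hi
    rcases eq_or_lt_of_le hi with he | hlt
    · have hi' : i = ⟨m, hmn⟩ := Fin.ext (by simp <;> omega)
      rw [hu, Equiv.Perm.mul_apply, hi', hv, ← hcdef, hcinvv]
    · rw [hu, Equiv.Perm.mul_apply, hfix i (by omega), ← hcdef]
      rw [Equiv.Perm.inv_def, Equiv.symm_apply_eq, hcdef, C_apply_ge i (by omega)]
  have huple : ∀ p : Fin n, p.val ≤ m → (u p).val ≤ m := by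
    intro p hp
    rw [hu, Equiv.Perm.mul_apply, ← hcdef]
    exact hcinvle _ (hvle p hp)
  have hedge : ∀ p : Fin n × Fin n, p ∈ invSet n u → p ∈ invSet n w ∧ p.2 ≠ ⟨m, hmn⟩ := by
    rintro ⟨p, q⟩ hm2
    rw [mem_invSet] at hm2
    obtain ⟨hpq, hvv⟩ := hm2
    have hpq' : p.val < q.val := hpq
    have hqm : q.val < m := by
      rcases lt_trichotomy q.val m with h5 | h5 | h5
      · exact h5
      · exfalso
        have hq' : q = ⟨m, hmn⟩ := Fin.ext (by simp <;> omega)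
        have h6 : u q = ⟨m, hmn⟩ := by rw [hq']; exact hufix _ (by simp)
        have h7 : (u p).val ≤ m := huple p (by omega)
        rw [h6] at hvv
        have h8 : m < (u p).val := by simpa [Fin.lt_def] using hvv
        omega
      · exfalso
        have h6 : u q = q := hufix q (by omega)
        rw [h6] at hvv
        rcases le_or_gt p.val m with h7 | h7
        · have h8 : (u p).val ≤ m := huple p h7
          have h9 : q.val < (u p).val := hvv
          omega
        · have h8 : u p = p := hufix p (by omega)
          rw [h8] at hvv
          have h9 : q.val < p.val := hvv
          omega
    have hpm : p.val < m := by omega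
    have hwpne : w p ≠ v := fun hcon => by
      have := hwm p hcon; rw [this] at hpm; simp at hpm
    have hwqne : w q ≠ v := fun hcon => by
      have := hwm q hcon; rw [this] at hqm; simp at hqm
    constructor
    · rw [mem_invSet]
      refine ⟨hpq, ?_⟩
      rcases lt_trichotomy (w p) (w q) with h5 | h5 | h5
      · exfalso
        have h6 : u p < u q := by
          rw [hu, Equiv.Perm.mul_apply, Equiv.Perm.mul_apply, ← hcdef]
          exact Cinv_mono h1a hak h5 (fun hcon => hwpne (Fin.ext (by omega)))
            (fun hcon => hwqne (Fin.ext (by omega)))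
        exact absurd hvv (lt_asymm h6)
      · exact absurd (w.injective h5) (ne_of_lt hpq)
      · exact h5
    · intro hcon
      have hq2 : q.val = m := congrArg Fin.val hcon
      omega
  set special : Finset (Fin n × Fin n) :=
    (Finset.Ioc v ⟨m, hmn⟩).image (fun y => (w⁻¹ y, (⟨m, hmn⟩ : Fin n))) with hsp
  have hspecialmem : ∀ p ∈ special, p ∈ invSet n w ∧ p.2 = ⟨m, hmn⟩ := by
    intro p hp
    rw [hsp, Finset.mem_image] at hp
    obtain ⟨y, hy, rfl⟩ := hp
    rw [Finset.mem_Ioc] at hy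
    have hyv : v < y := hy.1
    have hym : y.val ≤ m := by have := hy.2; simpa [Fin.le_def] using this
    have hwy : w (w⁻¹ y) = y := Equiv.Perm.apply_inv_self_s4 w y
    have hpm : (w⁻¹ y).val < m := by
      rcases lt_trichotomy (w⁻¹ y).val m with h5 | h5 | h5
      · exact h5
      · exfalso
        have h6 : w⁻¹ y = ⟨m, hmn⟩ := Fin.ext (by simp <;> omega)
        rw [h6, hv] at hwy
        rw [← hwy] at hyv
        exact lt_irrefl _ hyv
      · exfalso
        have h6 : w (w⁻¹ y) = w⁻¹ y := hfix _ (by omega)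
        rw [hwy] at h6
        rw [← h6] at h5
        omega
    refine ⟨mem_invSet.mpr ⟨by simpa [Fin.lt_def] using hpm, ?_⟩, rfl⟩
    rw [hv, hwy]
    exact hyv
  have hdisj : Disjoint (invSet n u) special := by
    rw [Finset.disjoint_left]
    intro p hp hps
    exact (hedge p hp).2 (hspecialmem p hps).2
  have hsub2 : (invSet n u) ∪ special ⊆ invSet n w := by
    intro p hp
    rcases Finset.mem_union.mp hp with h | h
    · exact (hedge p h).1
    · exact (hspecialmem p h).1
  have hcard2 : special.card = m - v.val := by
    rw [hsp, Finset.card_image_of_injective _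
      (fun x y hxy => w.symm.injective (congrArg Prod.fst hxy)), Fin.card_Ioc]
  calc invF n u + (m - v.val) = ((invSet n u) ∪ special).card := by
        rw [Finset.card_union_of_disjoint hdisj, hcard2]; rfl
    _ ≤ invF n w := Finset.card_le_card hsub2


lemma C_top' {m : ℕ} (hmn : m < n) {t : ℕ} (ht : t < m) :
    C n (t + 1) (m - t) ⟨m, hmn⟩ = ⟨t, by omega⟩ := by
  have h4 := C_apply_top (n := n) (a := t + 1) (k := m - t) (by omega) (by omega) (by omega)
    ⟨m, hmn⟩ (by simp <;> omega)
  rw [h4]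
  exact Fin.ext (by simp)

lemma wA_fix {m : ℕ} (hmn : m < n) (w : Equiv.Perm (Fin n))
    (hfix : ∀ i : Fin n, m + 1 ≤ i.val → w i = i) (j : Fin n) (hj : w j = ⟨m, hmn⟩)
    (hjm : j.val < m) :
    ∀ i : Fin n, m ≤ i.val → (w * C n (j.val + 1) (m - j.val)) i = i := by
  intro i hi
  rcases eq_or_lt_of_le hi with he | hlt
  · have hi' : i = ⟨m, hmn⟩ := Fin.ext (by simp <;> omega)
    have hcm : C n (j.val + 1) (m - j.val) ⟨m, hmn⟩ = j := by
      rw [C_top' hmn hjm]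
    rw [Equiv.Perm.mul_apply, hi', hcm, hj]
  · rw [Equiv.Perm.mul_apply, C_apply_ge i (by omega), hfix i (by omega)]

lemma uB_fix {m : ℕ} (hmn : m < n) (w : Equiv.Perm (Fin n))
    (hfix : ∀ i : Fin n, m + 1 ≤ i.val → w i = i) (v : Fin n) (hv : w ⟨m, hmn⟩ = v)
    (hvm : v.val < m) :
    ∀ i : Fin n, m ≤ i.val → ((C n (v.val + 1) (m - v.val))⁻¹ * w) i = i := by
  have hcinvv : (C n (v.val + 1) (m - v.val))⁻¹ v = ⟨m, hmn⟩ := by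
    have hcm := C_top' (n := n) hmn hvm
    have hveq : (⟨v.val, by omega⟩ : Fin n) = v := Fin.ext rfl
    rw [hveq] at hcm
    rw [Equiv.Perm.inv_def, Equiv.symm_apply_eq]
    exact hcm.symm
  intro i hi
  rcases eq_or_lt_of_le hi with he | hlt
  · have hi' : i = ⟨m, hmn⟩ := Fin.ext (by simp <;> omega)
    rw [Equiv.Perm.mul_apply, hi', hv, hcinvv]
  · rw [Equiv.Perm.mul_apply, hfix i (by omega)]
    rw [Equiv.Perm.inv_def, Equiv.symm_apply_eq, C_apply_ge i (by omega)]

lemma partII : ∀ m, m ≤ n → ∀ w : Equiv.Perm (Fin n),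
    (∀ i : Fin n, m ≤ i.val → w i = i) →
    ∃ rs : List (List ℕ), (∀ r ∈ rs, IsRun r) ∧ (∀ i ∈ rs.flatten, 1 ≤ i ∧ i < n) ∧
      (rs.flatten.map (simpleT n)).prod = w ∧ rs.flatten.length ≤ invF n w ∧
      ∀ is : List (Fin n), is.Pairwise (· < ·) → (is.map w).Pairwise (· < ·) →
        (∀ i ∈ is, i.val < m) → rs.length + is.length ≤ m := by
  intro m
  induction m with
  | zero =>
    intro _ w hfix
    have hw1 : w = 1 := Equiv.ext fun i => (hfix i (Nat.zero_le _)).trans rfl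
    refine ⟨[], by simp, by simp, by simpa using hw1.symm, by simp, ?_⟩
    intro is _ _ hpos
    have hisnil : is = [] := List.eq_nil_iff_forall_not_mem.mpr
      (fun x hx => by have := hpos x hx; omega)
    simp [hisnil]
  | succ m ih =>
    intro hm w hfix
    have hmn : m < n := by omega
    by_cases hfixm : w ⟨m, hmn⟩ = ⟨m, hmn⟩
    · obtain ⟨rs, h1, h2, h3, h4, h5⟩ := ih (by omega) w (fun i hi => by
        rcases eq_or_lt_of_le hi with he | hl
        · rw [show i = (⟨m, hmn⟩ : Fin n) from Fin.ext (by simp <;> omega)]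
          exact hfixm
        · exact hfix i (by omega))
      refine ⟨rs, h1, h2, h3, h4, ?_⟩
      intro is hp1 hp2 hp3
      have hnd := pairwise_nodup hp1
      by_cases hMmem : (⟨m, hmn⟩ : Fin n) ∈ is
      · have hlen := h5 (is.erase ⟨m, hmn⟩)
          (List.Pairwise.sublist (List.erase_sublist) hp1)
          (List.Pairwise.sublist (List.Sublist.map _ (List.erase_sublist)) hp2)
          (fun i hi => by
            have h6 := hnd.mem_erase_iff.mp hi
            have h7 := hp3 i h6.2
            have h8 : i.val ≠ m := fun hc => h6.1 (Fin.ext (by simp <;> omega))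
            omega)
        rw [List.length_erase_of_mem hMmem] at hlen
        have h9 : 1 ≤ is.length := List.length_pos_iff.mpr
          (fun hc => by rw [hc] at hMmem; simp at hMmem)
        omega
      · have hlen := h5 is hp1 hp2 (fun i hi => by
          have h7 := hp3 i hi
          have h8 : i.val ≠ m := fun hc => hMmem (by
            rw [← show i = (⟨m, hmn⟩ : Fin n) from Fin.ext (by simp <;> omega)]
            exact hi)
          omega)
        omega
    · set j := w⁻¹ ⟨m, hmn⟩ with hjdef
      have hj : w j = ⟨m, hmn⟩ := Equiv.Perm.apply_inv_self_s4 w _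
      have hjm : j.val < m := by
        rcases lt_trichotomy j.val m with h | h | h
        · exact h
        · exfalso
          have h6 : j = (⟨m, hmn⟩ : Fin n) := Fin.ext (by simp <;> omega)
          rw [h6] at hj
          exact hfixm hj
        · exfalso
          have h6 : w j = j := hfix j (by omega)
          rw [hj] at h6
          have h7 : m = j.val := congrArg Fin.val h6
          omega
      set v := w ⟨m, hmn⟩ with hvdef
      have hvne : v ≠ (⟨m, hmn⟩ : Fin n) := fun hc => hfixm (by rw [hvdef] at hc; exact hc)
      have hvm : v.val < m := by
        rcases lt_trichotomy v.val m with h | h | h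
        · exact h
        · exact absurd (Fin.ext (by simp <;> omega) : v = ⟨m, hmn⟩) hvne
        · exfalso
          have h6 : w v = v := hfix v (by omega)
          have h7 : (⟨m, hmn⟩ : Fin n) = v := w.injective (by rw [h6, ← hvdef])
          have h8 : m = v.val := congrArg Fin.val h7
          omega
      have hwm : ∀ p : Fin n, w p = v → p = ⟨m, hmn⟩ := fun p hp =>
        w.injective (by rw [hp, hvdef])
      set Lset : Set ℕ := {k2 | ∃ is : List (Fin n), (is.Pairwise (· < ·) ∧
        (is.map w).Pairwise (· < ·) ∧ ∀ i ∈ is, i.val < m + 1) ∧ is.length = k2} with hLset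
      have hne : Lset.Nonempty := ⟨0, [], ⟨List.Pairwise.nil, by simp, by simp⟩, rfl⟩
      have hbdd : BddAbove Lset := ⟨n, fun k2 hk2 => by
        obtain ⟨is, hPis, rfl⟩ := hk2
        have := (pairwise_nodup hPis.1).length_le_card
        simpa using this⟩
      obtain ⟨is₁, hPis₁, hlen₁⟩ := Nat.sSup_mem hne hbdd
      have hLmax : ∀ is : List (Fin n), is.Pairwise (· < ·) → (is.map w).Pairwise (· < ·) →
          (∀ i ∈ is, i.val < m + 1) → is.length ≤ sSup Lset :=
        fun is ha hb hc => le_csSup hbdd ⟨is, ⟨ha, hb, hc⟩, rfl⟩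
      have hdich : j ∉ is₁ ∨ (⟨m, hmn⟩ : Fin n) ∉ is₁ := by
        by_contra hcon
        push_neg at hcon
        have hjM : j < (⟨m, hmn⟩ : Fin n) := by simp [Fin.lt_def]; omega
        have h9 := pairwise_apply_of_mem hPis₁.1 hPis₁.2.1 hcon.1 hcon.2 hjM
        rw [hj, ← hvdef] at h9
        have h10 : m < v.val := h9
        omega
      rcases hdich with hcaseA | hcaseB
      · -- Case A : multiply on the right
        obtain ⟨rs', hr1, hr2, hr3, hr4, hr5⟩ := ih (by omega)
          (w * C n (j.val + 1) (m - j.val)) (wA_fix hmn w hfix j hj hjm)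
        have hfl : (([(List.range' (j.val + 1) (m - j.val)).reverse] : List (List ℕ))).flatten
            = (List.range' (j.val + 1) (m - j.val)).reverse := by simp
        refine ⟨rs' ++ [(List.range' (j.val + 1) (m - j.val)).reverse], ?_, ?_, ?_, ?_, ?_⟩
        · intro r hr
          rcases List.mem_append.mp hr with h | h
          · exact hr1 r h
          · rw [List.mem_singleton] at h
            subst h
            refine ⟨?_, Or.inr ?_⟩
            · intro hc
              have := congrArg List.length hc
              simp at this
              omega
            · apply List.isChain_reverse.mpr
              exact chain'_range' _ _
        · intro i hi
          rw [List.flatten_append, hfl] at hi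
          rcases List.mem_append.mp hi with h | h
          · exact hr2 i h
          · rw [List.mem_reverse, List.mem_range'_1] at h
            omega
        · rw [List.flatten_append, hfl, List.map_append, List.prod_append, hr3]
          rw [show ((List.range' (j.val + 1) (m - j.val)).reverse.map (simpleT n)).prod
            = (C n (j.val + 1) (m - j.val))⁻¹ from (prod_reverse_eq_inv _).symm]
          exact mul_inv_cancel_right w _
        · rw [List.flatten_append, hfl, List.length_append, List.length_reverse,
            List.length_range']
          have h6 := invA hmn w hfix j hj hjm
          omega
        · intro is hp1 hp2 hp3
          have hisL : is.length ≤ sSup Lset := hLmax is hp1 hp2 hp3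
          have h1a : 1 ≤ j.val + 1 := by omega
          have hak : (j.val + 1) + (m - j.val) ≤ n := by omega
          have hne2 : ∀ x ∈ is₁, x.val + 1 ≠ j.val + 1 := fun x hx hc =>
            hcaseA (by rw [← show x = j from Fin.ext (by omega)]; exact hx)
          have hp1' : (is₁.map (fun x => (C n (j.val + 1) (m - j.val))⁻¹ x)).Pairwise (· < ·) := by
            rw [List.pairwise_map]
            refine hPis₁.1.imp_of_mem (fun {x} {y} hx hy hxy => ?_)
            exact Cinv_mono h1a hak hxy (hne2 x hx) (hne2 y hy)
          have hmapeq : (is₁.map (fun x => (C n (j.val + 1) (m - j.val))⁻¹ x)).map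
              (w * C n (j.val + 1) (m - j.val)) = is₁.map w := by
            rw [List.map_map]
            apply List.map_congr_left
            intro x _
            simp [Function.comp, Equiv.Perm.mul_apply, Equiv.Perm.apply_inv_self_s4]
          have hp2' : ((is₁.map (fun x => (C n (j.val + 1) (m - j.val))⁻¹ x)).map
              (w * C n (j.val + 1) (m - j.val))).Pairwise (· < ·) := by
            rw [hmapeq]; exact hPis₁.2.1
          have hpos' : ∀ x ∈ is₁.map (fun x => (C n (j.val + 1) (m - j.val))⁻¹ x), x.val < m := by
            intro x hx
            rw [List.mem_map] at hx
            obtain ⟨y, hy, rfl⟩ := hx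
            have hyv := hPis₁.2.2 y hy
            rw [C_inv_apply h1a hak y (hne2 y hy)]
            split_ifs with h7
            · simp <;> omega
            · omega
          have hlen2 := hr5 _ hp1' hp2' hpos'
          rw [List.length_map, hlen₁] at hlen2
          simp only [List.length_append, List.length_singleton]
          omega
      · -- Case B : multiply on the left
        obtain ⟨rs', hr1, hr2, hr3, hr4, hr5⟩ := ih (by omega)
          ((C n (v.val + 1) (m - v.val))⁻¹ * w) (uB_fix hmn w hfix v hvdef.symm hvm)
        refine ⟨(List.range' (v.val + 1) (m - v.val)) :: rs', ?_, ?_, ?_, ?_, ?_⟩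
        · intro r hr
          rcases List.mem_cons.mp hr with h | h
          · subst h
            refine ⟨?_, Or.inl (chain'_range' _ _)⟩
            intro hc
            have := congrArg List.length hc
            simp at this
            omega
          · exact hr1 r h
        · intro i hi
          rw [List.flatten_cons] at hi
          rcases List.mem_append.mp hi with h | h
          · rw [List.mem_range'_1] at h
            omega
          · exact hr2 i h
        · rw [List.flatten_cons, List.map_append, List.prod_append, hr3]
          exact mul_inv_cancel_left _ _
        · rw [List.flatten_cons, List.length_append, List.length_range']
          have h6 := invB hmn w hfix v hvdef.symm hvm
          omega
        · intro is hp1 hp2 hp3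
          have hisL : is.length ≤ sSup Lset := hLmax is hp1 hp2 hp3
          have h1a : 1 ≤ v.val + 1 := by omega
          have hak : (v.val + 1) + (m - v.val) ≤ n := by omega
          have hnev : ∀ y ∈ is₁.map w, y.val + 1 ≠ v.val + 1 := by
            intro y hy hc
            rw [List.mem_map] at hy
            obtain ⟨x, hx, rfl⟩ := hy
            have h7 : w x = v := Fin.ext (by omega)
            exact hcaseB (by rw [← hwm x h7]; exact hx)
          have hp2' : (is₁.map (fun x => ((C n (v.val + 1) (m - v.val))⁻¹ * w) x)).Pairwise (· < ·) := by
            have hme : is₁.map (fun x => ((C n (v.val + 1) (m - v.val))⁻¹ * w) x)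
                = (is₁.map w).map (fun y => (C n (v.val + 1) (m - v.val))⁻¹ y) := by
              rw [List.map_map]; rfl
            rw [hme, List.pairwise_map]
            refine hPis₁.2.1.imp_of_mem (fun {x} {y} hx hy hxy => ?_)
            exact Cinv_mono h1a hak hxy (hnev x hx) (hnev y hy)
          have hpos' : ∀ x ∈ is₁, x.val < m := by
            intro x hx
            have h7 := hPis₁.2.2 x hx
            have h8 : x.val ≠ m := fun hc => hcaseB
              (by rw [← show x = (⟨m, hmn⟩ : Fin n) from Fin.ext (by simp <;> omega)]; exact hx)
            omega
          have hlen2 := hr5 is₁ hPis₁.1 hp2' hpos'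
          rw [hlen₁] at hlen2
          simp only [List.length_cons]
          omega

end Stmt4Aux

theorem stmt4 (n : ℕ) (w : Equiv.Perm (Fin n)) :
    sInf {k | ∃ rs : List (List ℕ), rs.length = k ∧ (∀ r ∈ rs, IsRun r) ∧
      IsWord n w rs.flatten} = runStat n w := by 
  classical
  obtain ⟨rs₀, h1, h2, h3, h4, h5⟩ := Stmt4Aux.partII (n := n) n le_rfl w
    (fun i hi => absurd i.isLt (not_lt.mpr hi))
  have hword₀ : IsWord n w rs₀.flatten := ⟨h2, h3⟩
  have hlow : ∀ l : List ℕ, IsWord n w l → Stmt4Aux.invF n w ≤ l.length := by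
    intro l hl
    have h6 := Stmt4Aux.invF_le_length (n := n) l
    rw [hl.2] at h6
    exact h6
  have hcox : coxLength n w = rs₀.flatten.length := by
    have hne2 : {k | ∃ l, IsWord n w l ∧ l.length = k}.Nonempty :=
      ⟨rs₀.flatten.length, rs₀.flatten, hword₀, rfl⟩
    have hA : coxLength n w ≤ rs₀.flatten.length := by
      rw [coxLength]
      exact Nat.sInf_le ⟨rs₀.flatten, hword₀, rfl⟩
    have hB : Stmt4Aux.invF n w ≤ coxLength n w := by
      rw [coxLength]
      apply le_csInf hne2
      rintro k ⟨l, hl, rfl⟩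
      exact hlow l hl
    have hC := hlow _ hword₀
    omega
  have hred₀ : IsReducedWord n w rs₀.flatten := ⟨hword₀, hcox.symm⟩
  set R : Set ℕ := {k | ∃ rs : List (List ℕ), rs.length = k ∧ (∀ r ∈ rs, IsRun r) ∧
    IsReducedWord n w rs.flatten} with hR
  set G : Set ℕ := {k | ∃ rs : List (List ℕ), rs.length = k ∧ (∀ r ∈ rs, IsRun r) ∧
    IsWord n w rs.flatten} with hG
  have hRne : R.Nonempty := ⟨rs₀.length, rs₀, rfl, h1, hred₀⟩
  have hRG : R ⊆ G := by rintro k ⟨rs, hl, hr, hw2⟩; exact ⟨rs, hl, hr, hw2.1⟩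
  have hGne : G.Nonempty := ⟨rs₀.length, rs₀, rfl, h1, hword₀⟩
  have hrunR : runStat n w = sInf R := rfl
  apply le_antisymm
  · rw [hrunR]
    exact Nat.sInf_le (hRG (Nat.sInf_mem hRne))
  · obtain ⟨rs₁, hlen1, hruns1, hword1⟩ := Nat.sInf_mem hGne
    obtain ⟨is, hp1, hp2, hlen3⟩ := Stmt4Aux.partI (n := n) rs₁ hruns1 hword1.1
    rw [hword1.2] at hp2
    have h6 := h5 is hp1 hp2 (fun i _ => i.isLt)
    rw [hrunR]
    refine le_trans (Nat.sInf_le ⟨rs₀, rfl, h1, hred₀⟩) ?_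
    omega
end

section
/- A permutation w is boolean (i.e., some reduced word of w has all distinct letters) if and only if every reduced word of w has all distinct letters. -/
-- per generator cut lemma
lemma simpleT_cut {n j i : ℕ} (hj1 : 1 ≤ j) (hj2 : j < n) (hij : j ≠ i) (x : Fin n) :
    ((simpleT n j x : ℕ) < i ↔ (x : ℕ) < i) := by
  unfold simpleT
  rw [dif_pos ⟨hj1, hj2⟩]
  rcases eq_or_ne x ⟨j - 1, by omega⟩ with rfl | h1
  · rw [Equiv.swap_apply_left]; simp only []; omega
  rcases eq_or_ne x ⟨j, hj2⟩ with rfl | h2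
  · rw [Equiv.swap_apply_right]; simp only []; omega
  · rw [Equiv.swap_apply_of_ne_of_ne h1 h2]

lemma word_cut {n i : ℕ} {l : List ℕ} (hw : ∀ j ∈ l, 1 ≤ j ∧ j < n) (hi : i ∉ l)
    (x : Fin n) : (((l.map (simpleT n)).prod x : ℕ) < i ↔ (x : ℕ) < i) := by
  induction l generalizing x with
  | nil => simp
  | cons a t ih =>
    have ha := hw a (by simp)
    rw [List.map_cons, List.prod_cons, Equiv.Perm.mul_apply]
    rw [simpleT_cut ha.1 ha.2 (fun h : a = i => hi (h ▸ (List.mem_cons_self : a ∈ a :: t)))]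
    exact ih (fun j hj => hw j (List.mem_cons_of_mem _ hj)) (fun h => hi (List.mem_cons_of_mem _ h)) x

lemma word_single {n i : ℕ} {w : Equiv.Perm (Fin n)} {l1 l2 : List ℕ}
    (hw : IsWord n w (l1 ++ i :: l2)) (h1 : i ∉ l1) (h2 : i ∉ l2) :
    ¬ (∀ x : Fin n, ((w x : ℕ) < i ↔ (x : ℕ) < i)) := by
  obtain ⟨hr, hp⟩ := hw
  have hi : 1 ≤ i ∧ i < n := hr i (by simp)
  intro H
  set Q := (l2.map (simpleT n)).prod with hQ
  set P := (l1.map (simpleT n)).prod with hP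
  have hw' : w = P * (simpleT n i * Q) := by
    rw [← hp, List.map_append, List.prod_append, List.map_cons, List.prod_cons]
  have hr1 : ∀ j ∈ l1, 1 ≤ j ∧ j < n := fun j hj => hr j (by simp [hj])
  have hr2 : ∀ j ∈ l2, 1 ≤ j ∧ j < n := fun j hj => hr j (by simp [hj])
  set x := Q⁻¹ ⟨i - 1, by omega⟩ with hx
  have hQx : Q x = ⟨i - 1, by omega⟩ := by rw [hx, ← Equiv.Perm.mul_apply, mul_inv_cancel, Equiv.Perm.one_apply]
  have hxlt : (x : ℕ) < i := by
    rw [← word_cut hr2 h2 x, ← hQ, hQx]; simp only []; omega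
  have hsw : simpleT n i (Q x) = ⟨i, hi.2⟩ := by
    rw [hQx]; unfold simpleT; rw [dif_pos hi, Equiv.swap_apply_left]
  have hwx : (w x : ℕ) = (P ⟨i, hi.2⟩ : ℕ) := by
    rw [hw', Equiv.Perm.mul_apply, Equiv.Perm.mul_apply, hsw]
  have : ¬ ((P ⟨i, hi.2⟩ : ℕ) < i) := by
    rw [hP, word_cut hr1 h1]; simp
  have := (H x).2 hxlt
  omega

def invF {n : ℕ} (w : Equiv.Perm (Fin n)) : ℕ :=
  ((Finset.univ : Finset (Fin n × Fin n)).filter (fun p => p.1 < p.2 ∧ w p.2 < w p.1)).card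

lemma simpleT_val {n a : ℕ} (ha : a + 1 < n) (x : Fin n) :
    ((simpleT n (a + 1) x : ℕ)) =
      if (x : ℕ) = a then a + 1 else if (x : ℕ) = a + 1 then a else (x : ℕ) := by
  unfold simpleT
  rw [dif_pos ⟨by omega, ha⟩, Equiv.swap_apply_def]
  split_ifs with h1 h2 h3 h4 h5 <;>
    simp_all [Fin.ext_iff] <;> omega

lemma inv_decrease {n a : ℕ} (ha : a + 1 < n) (w : Equiv.Perm (Fin n))
    (hd : (w ⟨a + 1, ha⟩ : ℕ) < (w ⟨a, Nat.lt_of_succ_lt ha⟩ : ℕ)) :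
    invF (w * simpleT n (a + 1)) < invF w := by
  classical
  set s := simpleT n (a + 1) with hs
  set A := (Finset.univ : Finset (Fin n × Fin n)).filter
    (fun p => p.1 < p.2 ∧ (w * s) p.2 < (w * s) p.1) with hA
  set B := (Finset.univ : Finset (Fin n × Fin n)).filter
    (fun p => p.1 < p.2 ∧ w p.2 < w p.1) with hB
  have hmem : ((⟨a, Nat.lt_of_succ_lt ha⟩, ⟨a + 1, ha⟩) : Fin n × Fin n) ∈ B := by
    simp only [hB, Finset.mem_filter, Finset.mem_univ, true_and]
    exact ⟨Fin.mk_lt_mk.mpr (by omega), by rw [Fin.lt_def]; exact hd⟩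
  have key : ∀ p ∈ A, (s p.1, s p.2) ∈ B.erase (⟨a, Nat.lt_of_succ_lt ha⟩, ⟨a + 1, ha⟩) := by
    rintro ⟨x, y⟩ hp
    simp only [hA, Finset.mem_filter, Finset.mem_univ, true_and] at hp
    obtain ⟨hlt, hinv⟩ := hp
    simp only [Equiv.Perm.mul_apply] at hinv
    have hne : ¬((x : ℕ) = a ∧ (y : ℕ) = a + 1) := by
      rintro ⟨h1, h2⟩
      have hx : x = (⟨a, Nat.lt_of_succ_lt ha⟩ : Fin n) := Fin.ext h1
      have hy : y = (⟨a + 1, ha⟩ : Fin n) := Fin.ext h2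
      subst hx; subst hy
      have e1 : s (⟨a, Nat.lt_of_succ_lt ha⟩ : Fin n) = ⟨a + 1, ha⟩ := by
        apply Fin.ext
        rw [hs, simpleT_val ha]
        simp only [Fin.val_mk]
        split_ifs <;> omega
      have e2 : s (⟨a + 1, ha⟩ : Fin n) = ⟨a, Nat.lt_of_succ_lt ha⟩ := by
        apply Fin.ext
        rw [hs, simpleT_val ha]
        simp only [Fin.val_mk]
        split_ifs <;> omega
      rw [e1, e2] at hinv
      rw [Fin.lt_def] at hinv
      exact absurd hinv (by omega)
    have hv1 := simpleT_val ha x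
    have hv2 := simpleT_val ha y
    rw [← hs] at hv1 hv2
    have hslt : s x < s y := by
      rw [Fin.lt_def] at hlt ⊢
      split_ifs at hv1 hv2 <;> omega
    refine Finset.mem_erase.mpr ⟨?_, ?_⟩
    · intro hc
      simp only [Prod.mk.injEq, Fin.ext_iff, Fin.val_mk] at hc
      rw [Fin.lt_def] at hlt
      split_ifs at hv1 hv2 <;> omega
    · simp only [hB, Finset.mem_filter, Finset.mem_univ, true_and]
      exact ⟨hslt, hinv⟩
  have hinj : Set.InjOn (fun p : Fin n × Fin n => (s p.1, s p.2)) A := by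
    rintro ⟨x1, y1⟩ _ ⟨x2, y2⟩ _ h
    simp only [Prod.mk.injEq] at h
    exact Prod.ext (s.injective h.1) (s.injective h.2)
  calc invF (w * s) ≤ (B.erase (⟨a, Nat.lt_of_succ_lt ha⟩, ⟨a + 1, ha⟩)).card :=
        Finset.card_le_card_of_injOn _ key hinj
    _ < B.card := Finset.card_erase_lt_of_mem hmem

lemma simpleT_mul_self (n i : ℕ) : simpleT n i * simpleT n i = 1 := by
  unfold simpleT
  split_ifs with h
  · exact Equiv.swap_mul_self _ _
  · exact one_mul 1

lemma exists_word (n : ℕ) (w : Equiv.Perm (Fin n)) : ∃ l, IsWord n w l := by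
  generalize hm : invF w = m
  induction m using Nat.strong_induction_on generalizing w with
  | _ m ih =>
  by_cases hd : ∃ a : ℕ, ∃ h : a + 1 < n, (w ⟨a + 1, h⟩ : ℕ) < (w ⟨a, Nat.lt_of_succ_lt h⟩ : ℕ)
  · obtain ⟨a, h, hdlt⟩ := hd
    have hdec := inv_decrease h w hdlt
    rw [hm] at hdec
    obtain ⟨l, hl1, hl2⟩ := ih _ hdec (w * simpleT n (a + 1)) rfl
    refine ⟨l ++ [a + 1], fun j hj => ?_, ?_⟩
    · rcases List.mem_append.mp hj with h' | h'
      · exact hl1 j h'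
      · simp only [List.mem_singleton] at h'; omega
    · rw [List.map_append, List.prod_append, hl2]
      simp only [List.map_cons, List.map_nil, List.prod_cons, List.prod_nil, mul_one]
      rw [mul_assoc, simpleT_mul_self, mul_one]
  · push_neg at hd
    have hw1 : w = 1 := by
      match n, w, hd with
      | 0, w, hd => exact Subsingleton.elim _ _
      | (m + 1), w, hd =>
        have hsm : StrictMono w := by
          rw [Fin.strictMono_iff_lt_succ]
          intro i
          have h1 := hd i.val (by omega)
          have hne : w (Fin.castSucc i) ≠ w i.succ := by
            intro hc
            have := w.injective hc
            rw [Fin.ext_iff] at this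
            simp at this
          rw [Fin.lt_def]
          have e1 : Fin.castSucc i = (⟨i.val, by omega⟩ : Fin (m + 1)) := rfl
          have e2 : i.succ = (⟨i.val + 1, by omega⟩ : Fin (m + 1)) := rfl
          rw [Fin.ne_iff_vne, e1, e2] at hne
          rw [e1, e2]
          omega
        have : ⇑w = id := (@StrictMono.range_inj (Fin (m + 1)) (Fin (m + 1)) _ _
            (inferInstance : WellFoundedLT (Fin (m + 1))) _ _ hsm
            (strictMono_id : StrictMono (id : Fin (m + 1) → Fin (m + 1)))).mp
          (by rw [Set.range_eq_univ.mpr w.surjective, Set.range_id])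
        exact Equiv.ext fun x => congrFun this x
    exact ⟨[], fun j hj => absurd hj List.not_mem_nil, by simp [hw1]⟩

lemma reduced_exists (n : ℕ) (w : Equiv.Perm (Fin n)) : ∃ l, IsReducedWord n w l := by
  have hne : ∃ k, k ∈ {k | ∃ l, IsWord n w l ∧ l.length = k} := by
    obtain ⟨l, hl⟩ := exists_word n w
    exact ⟨l.length, l, hl, rfl⟩
  obtain ⟨l, hl, hlen⟩ := Nat.sInf_mem hne
  exact ⟨l, hl, hlen⟩

theorem stmt5 (n : ℕ) (w : Equiv.Perm (Fin n)) :
    BooleanPerm n w ↔ ∀ l, IsReducedWord n w l → l.Nodup := by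
  constructor
  · rintro ⟨l, hl, hnd⟩ l' hl'
    have hlen : l'.length = l.length := by rw [hl.2, hl'.2]
    have hsub : l.toFinset ⊆ l'.toFinset := by
      intro i hi
      rw [List.mem_toFinset] at hi ⊢
      by_contra hninl'
      have hcut : ∀ x : Fin n, ((w x : ℕ) < i ↔ (x : ℕ) < i) := by
        intro x
        have := word_cut hl'.1.1 hninl' x
        rwa [hl'.1.2] at this
      obtain ⟨l1, l2, hsplit⟩ := List.append_of_mem hi
      rw [hsplit] at hnd
      rw [List.nodup_append'] at hnd
      have h1 : i ∉ l1 := fun hc => hnd.2.2 hc (List.mem_cons_self : i ∈ i :: l2)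
      have h2 : i ∉ l2 := (List.nodup_cons.mp hnd.2.1).1
      have hw' : IsWord n w (l1 ++ i :: l2) := by rw [← hsplit]; exact hl.1
      exact word_single hw' h1 h2 hcut
    have hc1 : l.toFinset.card = l.length := List.toFinset_card_of_nodup hnd
    have hc2 : l'.toFinset.card ≤ l.toFinset.card := by
      calc l'.toFinset.card ≤ l'.length := List.toFinset_card_le l'
        _ = l.length := hlen
        _ = l.toFinset.card := hc1.symm
    have hcard : l'.toFinset.card = l'.length := by
      have := Finset.card_le_card hsub
      omega
    rw [List.card_toFinset] at hcard
    have hded : l'.dedup = l' := l'.dedup_sublist.eq_of_length hcard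
    exact List.dedup_eq_self.mp hded
  · intro h
    obtain ⟨l, hl⟩ := reduced_exists n w
    exact ⟨l, hl, h l hl⟩
end
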